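/- arXiv:2205.03800 — 3 statements merged into one kernel-verified Lean document; each statement's English description precedes it below -/
import Mathlib

section
/- Let φ : 𝔾 → ℝ be the viscosity solution of the Cauchy problem. If φ is ci-differentiable at a point (τ,z,w) ∈ 𝔾_*, then φ satisfies the Hamilton–Jacobi equation at this point, i.e. ∂^{ci}_{τ,w}φ(τ,z,w) + ⟨∂^{ci}_{τ,w} g(τ,w), ∇_z φ(τ,z,w)⟩ + H(τ,z,w(−h), ∇_z φ(τ,z,w)) = 0. -/
open Filter Set MeasureTheory Asymptotics
open scoped InnerProductSpace Topology

noncomputable section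

/-- `ℝⁿ` with the Euclidean inner product. -/
abbrev E (n : ℕ) : Type := EuclideanSpace ℝ (Fin n)

/-- The left limit `w(a - 0)`. -/
def leftLimit {n : ℕ} (w : ℝ → E n) (a : ℝ) : E n :=
  limUnder (nhdsWithin a (Set.Iio a)) w

/-- A function is piecewise Lipschitz on `[a,b)` (or `[a,b]`) if there is a partition
`a = ξ₀ < ξ₁ < … < ξ_k = b` such that it is Lipschitz on every `[ξ_i, ξ_{i+1})`. -/
def PiecewiseLipOn {n : ℕ} (x : ℝ → E n) (a b : ℝ) : Prop :=
  ∃ (k : ℕ) (ξ : ℕ → ℝ), 0 < k ∧ ξ 0 = a ∧ ξ k = b ∧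
    (∀ i < k, ξ i < ξ (i + 1)) ∧
    ∀ i < k, ∃ K, LipschitzOnWith K x (Set.Ico (ξ i) (ξ (i + 1)))

/-- `w ∈ PLip`: piecewise Lipschitz on `[-h, 0)`. -/
def IsPLip {n : ℕ} (h : ℝ) (w : ℝ → E n) : Prop := PiecewiseLipOn w (-h) 0

/-- `w ∈ Lip`: Lipschitz continuous on `[-h, 0)`. -/
def IsLip {n : ℕ} (h : ℝ) (w : ℝ → E n) : Prop :=
  ∃ K, LipschitzOnWith K w (Set.Ico (-h) 0)

/-- `w ∈ C¹`: continuously differentiable on `[-h, 0)` (up to the closure). -/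
def IsC1 {n : ℕ} (h : ℝ) (w : ℝ → E n) : Prop := ContDiffOn ℝ 1 w (Set.Icc (-h) 0)

/-- `w ∈ PLip_*`: piecewise Lipschitz and continuously differentiable on
`[-h, -h+δ]` for some `δ > 0`. -/
def IsPLipStar {n : ℕ} (h : ℝ) (w : ℝ → E n) : Prop :=
  IsPLip h w ∧ ∃ δ > 0, ContDiffOn ℝ 1 w (Set.Icc (-h) (-h + δ))

/-- `‖w‖₁ = ∫_{-h}^0 ‖w(ξ)‖ dξ`. -/
def norm1 {n : ℕ} (h : ℝ) (w : ℝ → E n) : ℝ := ∫ ξ in (-h)..(0:ℝ), ‖w ξ‖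

/-- `‖w‖_∞ = sup_{ξ ∈ [-h,0)} ‖w(ξ)‖`. -/
def normInf {n : ℕ} (h : ℝ) (w : ℝ → E n) : ℝ :=
  ⨆ ξ : Set.Ico (-h) (0:ℝ), ‖w ξ.1‖

/-- `(τ,z,w) ∈ 𝔾 = [0,ϑ] × ℝⁿ × PLip` (the `z`-component is unconstrained). -/
def InG {n : ℕ} (I : ℕ) (h τ : ℝ) (w : ℝ → E n) : Prop :=
  τ ∈ Set.Icc (0:ℝ) ((I:ℝ) * h) ∧ IsPLip h w

/-- `(τ,z,w) ∈ 𝔾_* = ⋃_{i<I} (ih,(i+1)h) × ℝⁿ × PLip_*`. -/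
def InGstar {n : ℕ} (I : ℕ) (h τ : ℝ) (w : ℝ → E n) : Prop :=
  (∃ i : ℕ, i < I ∧ τ ∈ Set.Ioo ((i:ℝ) * h) (((i:ℝ) + 1) * h)) ∧ IsPLipStar h w

/-- `x ∈ Λ(τ,z,w)`. -/
def InLambda {n : ℕ} (I : ℕ) (h τ : ℝ) (z : E n) (w x : ℝ → E n) : Prop :=
  PiecewiseLipOn x (τ - h) ((I:ℝ) * h) ∧ x τ = z ∧
    ∀ t ∈ Set.Ico (τ - h) τ, x t = w (t - τ)

/-- `x ∈ Λ₀(τ,z,w)`: moreover constantly equal to `z` on `[τ,ϑ]`. -/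
def InLambda0 {n : ℕ} (I : ℕ) (h τ : ℝ) (z : E n) (w x : ℝ → E n) : Prop :=
  InLambda I h τ z w x ∧ ∀ t ∈ Set.Icc τ ((I:ℝ) * h), x t = z

/-- `x_t(ξ) = x(t + ξ)`. -/
def shift {n : ℕ} (x : ℝ → E n) (t : ℝ) : ℝ → E n := fun ξ => x (t + ξ)

/-- `(z,w) ∈ P(α)`. -/
def InP {n : ℕ} (h α : ℝ) (z : E n) (w : ℝ → E n) : Prop :=
  IsPLip h w ∧ ‖z‖ ≤ α ∧ normInf h w ≤ α

/-- `υ(τ,z,w) = ‖z‖ + ‖w‖₁ + ‖w(-h)‖ + ‖w(ih - τ)‖` for the `i ∈ {-1,…,I-1}` with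
`τ ∈ (ih, (i+1)h]`, i.e. `i = ⌈τ/h⌉ - 1`. -/
def upsilon {n : ℕ} (h τ : ℝ) (z : E n) (w : ℝ → E n) : ℝ :=
  ‖z‖ + norm1 h w + ‖w (-h)‖ + ‖w (((⌈τ / h⌉ - 1 : ℤ) : ℝ) * h - τ)‖

/-- Condition (φ₁). -/
def Phi1 {n : ℕ} (I : ℕ) (h : ℝ) (φ : ℝ → E n → (ℝ → E n) → ℝ) : Prop :=
  ∀ τ ∈ Set.Icc (0:ℝ) ((I:ℝ) * h), ∀ w : ℝ → E n, IsLip h w →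
    ContinuousOn (fun t => φ t (leftLimit w 0) w) (Set.Icc τ ((I:ℝ) * h))

/-- Condition (φ₂). -/
def Phi2 {n : ℕ} (I : ℕ) (h : ℝ) (φ : ℝ → E n → (ℝ → E n) → ℝ) : Prop :=
  ∀ α > 0, ∃ lam > 0, ∀ τ ∈ Set.Icc (0:ℝ) ((I:ℝ) * h),
    ∀ (z : E n) (w : ℝ → E n) (z' : E n) (w' : ℝ → E n),
      InP h α z w → InP h α z' w' →
        |φ τ z w - φ τ z' w'| ≤ lam * upsilon h τ (z - z') (w - w')

/-- Terminal condition `φ(ϑ,z,w) = σ(z,w)` on `ℝⁿ × PLip`. -/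
def TermCond {n : ℕ} (I : ℕ) (h : ℝ) (σf : E n → (ℝ → E n) → ℝ)
    (φ : ℝ → E n → (ℝ → E n) → ℝ) : Prop :=
  ∀ (z : E n) (w : ℝ → E n), IsPLip h w → φ ((I:ℝ) * h) z w = σf z w

/-- Two functionals agree on `𝔾`. -/
def AgreeOnG {n : ℕ} (I : ℕ) (h : ℝ) (φ φ' : ℝ → E n → (ℝ → E n) → ℝ) : Prop :=
  ∀ (τ : ℝ) (z : E n) (w : ℝ → E n), InG I h τ w → φ τ z w = φ' τ z w

/-- Condition (g): `g` is continuously differentiable on `[0,ϑ] × ℝⁿ`. -/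
def CondG {n : ℕ} (I : ℕ) (h : ℝ) (g : ℝ → E n → E n) : Prop :=
  ContDiffOn ℝ 1 (Function.uncurry g)
    (Set.Icc (0:ℝ) ((I:ℝ) * h) ×ˢ (Set.univ : Set (E n)))

/-- Condition (H₁): continuity. -/
def CondH1 {n : ℕ} (I : ℕ) (h : ℝ) (H : ℝ → E n → E n → E n → ℝ) : Prop :=
  ContinuousOn (fun q : ℝ × E n × E n × E n => H q.1 q.2.1 q.2.2.1 q.2.2.2)
    (Set.Icc (0:ℝ) ((I:ℝ) * h) ×ˢ (Set.univ : Set (E n × E n × E n)))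

/-- Condition (H₂). -/
def CondH2 {n : ℕ} (I : ℕ) (h cH : ℝ) (H : ℝ → E n → E n → E n → ℝ) : Prop :=
  0 < cH ∧ ∀ τ ∈ Set.Icc (0:ℝ) ((I:ℝ) * h), ∀ z r s s' : E n,
    |H τ z r s - H τ z r s'| ≤ cH * (1 + ‖z‖ + ‖r‖) * ‖s - s'‖

/-- Condition (H₃). -/
def CondH3 {n : ℕ} (I : ℕ) (h : ℝ) (H : ℝ → E n → E n → E n → ℝ) : Prop :=
  ∀ α > 0, ∃ lam > 0, ∀ τ ∈ Set.Icc (0:ℝ) ((I:ℝ) * h), ∀ z r z' r' s : E n,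
    ‖z‖ ≤ α → ‖r‖ ≤ α → ‖z'‖ ≤ α → ‖r'‖ ≤ α →
      |H τ z r s - H τ z' r' s| ≤ lam * (‖z - z'‖ + ‖r - r'‖) * (1 + ‖s‖)

/-- Condition (σ). -/
def CondSigma {n : ℕ} (h : ℝ) (σf : E n → (ℝ → E n) → ℝ) : Prop :=
  ∀ α > 0, ∃ lam > 0, ∀ (z : E n) (w : ℝ → E n) (z' : E n) (w' : ℝ → E n),
    InP h α z w → InP h α z' w' →
      |σf z w - σf z' w'| ≤ lam * (‖z - z'‖ + norm1 h (fun ξ => w ξ - w' ξ))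

/-- `∂^{ci}_{τ,w} g(τ,w) = ∂g(τ,w(-h))/∂τ + ∇_x g(τ,w(-h)) · (d⁺w(-h)/dξ)`. -/
def ciDg {n : ℕ} (I : ℕ) (h : ℝ) (g : ℝ → E n → E n) (τ : ℝ) (w : ℝ → E n) : E n :=
  derivWithin (fun t => g t (w (-h))) (Set.Icc (0:ℝ) ((I:ℝ) * h)) τ +
    fderiv ℝ (g τ) (w (-h)) (derivWithin w (Set.Ici (-h)) (-h))

/-- `F^η(x,y) = {l : ‖l‖ ≤ c_H (1 + ‖x‖ + ‖y‖) + η}`. -/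
def Fset {n : ℕ} (cH η : ℝ) (x y : E n) : Set (E n) :=
  {l : E n | ‖l‖ ≤ cH * (1 + ‖x‖ + ‖y‖) + η}

/-- `x ∈ X^η(τ,z,w)`. -/
def InX {n : ℕ} (I : ℕ) (h : ℝ) (g : ℝ → E n → E n) (cH η τ : ℝ) (z : E n)
    (w x : ℝ → E n) : Prop :=
  InLambda I h τ z w x ∧
  (∃ K, LipschitzOnWith K (fun t => x t - g t (x (t - h))) (Set.Icc τ ((I:ℝ) * h))) ∧
  ∀ᵐ t ∂(volume : Measure ℝ), t ∈ Set.Icc τ ((I:ℝ) * h) →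
    ∃ l ∈ Fset cH η (x t) (x (t - h)),
      HasDerivAt (fun r => x r - g r (x (r - h))) l t

/-- `ω(τ,t,x,s)`. -/
def omegaF {n : ℕ} (h : ℝ) (g : ℝ → E n → E n) (H : ℝ → E n → E n → E n → ℝ)
    (τ t : ℝ) (x : ℝ → E n) (s : E n) : ℝ :=
  (∫ ξ in τ..t, H ξ (x ξ) (x (ξ - h)) s) -
    ⟪(x t - g t (x (t - h))) - (x τ - g τ (x (τ - h))), s⟫_ℝ

/-- The upper minimax inequality (U):
`inf_{x ∈ X^η(τ,z,w)} [φ(t,x(t),x_t) + ω(τ,t,x,s)] ≤ φ(τ,z,w)`. -/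
def Uineq {n : ℕ} (I : ℕ) (h : ℝ) (g : ℝ → E n → E n) (H : ℝ → E n → E n → E n → ℝ)
    (cH : ℝ) (φ : ℝ → E n → (ℝ → E n) → ℝ) (τ : ℝ) (z : E n) (w : ℝ → E n)
    (t : ℝ) (s : E n) (η : ℝ) : Prop :=
  ∀ ε > 0, ∃ x : ℝ → E n, InX I h g cH η τ z w x ∧
    φ t (x t) (shift x t) + omegaF h g H τ t x s ≤ φ τ z w + ε

/-- The lower minimax inequality (L):
`sup_{x ∈ X^η(τ,z,w)} [φ(t,x(t),x_t) + ω(τ,t,x,s)] ≥ φ(τ,z,w)`. -/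
def Lineq {n : ℕ} (I : ℕ) (h : ℝ) (g : ℝ → E n → E n) (H : ℝ → E n → E n → E n → ℝ)
    (cH : ℝ) (φ : ℝ → E n → (ℝ → E n) → ℝ) (τ : ℝ) (z : E n) (w : ℝ → E n)
    (t : ℝ) (s : E n) (η : ℝ) : Prop :=
  ∀ ε > 0, ∃ x : ℝ → E n, InX I h g cH η τ z w x ∧
    φ τ z w - ε ≤ φ t (x t) (shift x t) + omegaF h g H τ t x s

/-- Minimax solution of the Cauchy problem. -/
def IsMinimaxSol {n : ℕ} (I : ℕ) (h : ℝ) (g : ℝ → E n → E n)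
    (H : ℝ → E n → E n → E n → ℝ) (cH : ℝ) (σf : E n → (ℝ → E n) → ℝ)
    (φ : ℝ → E n → (ℝ → E n) → ℝ) : Prop :=
  Phi1 I h φ ∧ Phi2 I h φ ∧ TermCond I h σf φ ∧
  ∀ (τ : ℝ) (z : E n) (w : ℝ → E n), InG I h τ w → τ < (I:ℝ) * h →
    ∀ t ∈ Set.Ioc τ ((I:ℝ) * h), ∀ s : E n,
      Uineq I h g H cH φ τ z w t s 0 ∧ Lineq I h g H cH φ τ z w t s 0

/-- Lip-minimax solution of the Cauchy problem. -/
def IsLipMinimaxSol {n : ℕ} (I : ℕ) (h : ℝ) (g : ℝ → E n → E n)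
    (H : ℝ → E n → E n → E n → ℝ) (cH : ℝ) (σf : E n → (ℝ → E n) → ℝ)
    (φ : ℝ → E n → (ℝ → E n) → ℝ) : Prop :=
  Phi1 I h φ ∧ Phi2 I h φ ∧
  (∀ w : ℝ → E n, IsLip h w →
    φ ((I:ℝ) * h) (leftLimit w 0) w = σf (leftLimit w 0) w) ∧
  ∀ τ ∈ Set.Ico (0:ℝ) ((I:ℝ) * h), ∀ w : ℝ → E n, IsLip h w →
    ∀ t ∈ Set.Ioc τ ((I:ℝ) * h), ∀ s : E n,
      Uineq I h g H cH φ τ (leftLimit w 0) w t s 0 ∧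
      Lineq I h g H cH φ τ (leftLimit w 0) w t s 0

/-- C¹-minimax solution of the Cauchy problem. -/
def IsC1MinimaxSol {n : ℕ} (I : ℕ) (h : ℝ) (g : ℝ → E n → E n)
    (H : ℝ → E n → E n → E n → ℝ) (cH : ℝ) (σf : E n → (ℝ → E n) → ℝ)
    (φ : ℝ → E n → (ℝ → E n) → ℝ) : Prop :=
  Phi1 I h φ ∧ Phi2 I h φ ∧
  (∀ w : ℝ → E n, IsC1 h w →
    φ ((I:ℝ) * h) (leftLimit w 0) w = σf (leftLimit w 0) w) ∧
  ∀ i : ℕ, i < I → ∀ τ ∈ Set.Ico ((i:ℝ) * h) (((i:ℝ) + 1) * h),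
    ∀ w : ℝ → E n, IsC1 h w → ∀ t ∈ Set.Ioc τ (((i:ℝ) + 1) * h), ∀ s : E n,
      ∀ η ∈ Set.Ioc (0:ℝ) 1,
        Uineq I h g H cH φ τ (leftLimit w 0) w t s η ∧
        Lineq I h g H cH φ τ (leftLimit w 0) w t s η

/-- `O⁺_δ(τ,z) = {(t,x) ∈ [τ,τ+δ] × ℝⁿ : ‖x - z‖ ≤ δ}`. -/
def OPlus {n : ℕ} (δ τ : ℝ) (z : E n) : Set (ℝ × E n) :=
  {p : ℝ × E n | p.1 ∈ Set.Icc τ (τ + δ) ∧ ‖p.2 - z‖ ≤ δ}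

/-- Viscosity solution of the Cauchy problem. -/
def IsViscositySol {n : ℕ} (I : ℕ) (h : ℝ) (g : ℝ → E n → E n)
    (H : ℝ → E n → E n → E n → ℝ) (σf : E n → (ℝ → E n) → ℝ)
    (φ : ℝ → E n → (ℝ → E n) → ℝ) : Prop :=
  Phi1 I h φ ∧ Phi2 I h φ ∧ TermCond I h σf φ ∧
  (∀ (τ : ℝ) (z : E n) (w : ℝ → E n), InGstar I h τ w →
    ∀ ψ : ℝ → E n → ℝ, ContDiff ℝ 1 (Function.uncurry ψ) →
    ∀ δ > 0, ∀ κ : ℝ → E n, InLambda0 I h τ z w κ →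
    (∀ (t : ℝ) (x : E n), (t, x) ∈ OPlus δ τ z →
        φ τ z w - ψ τ z ≤ φ t x (shift κ t) - ψ t x) →
    deriv (fun r => ψ r z) τ + ⟪ciDg I h g τ w, gradient (ψ τ) z⟫_ℝ +
      H τ z (w (-h)) (gradient (ψ τ) z) ≤ 0) ∧
  (∀ (τ : ℝ) (z : E n) (w : ℝ → E n), InGstar I h τ w →
    ∀ ψ : ℝ → E n → ℝ, ContDiff ℝ 1 (Function.uncurry ψ) →
    ∀ δ > 0, ∀ κ : ℝ → E n, InLambda0 I h τ z w κ →
    (∀ (t : ℝ) (x : E n), (t, x) ∈ OPlus δ τ z →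
        φ t x (shift κ t) - ψ t x ≤ φ τ z w - ψ τ z) →
    0 ≤ deriv (fun r => ψ r z) τ + ⟪ciDg I h g τ w, gradient (ψ τ) z⟫_ℝ +
      H τ z (w (-h)) (gradient (ψ τ) z))

/-- `φ` is ci-differentiable at `(τ,z,w)` with ci-derivative `a` and gradient `p`. -/
def HasCiDeriv {n : ℕ} (I : ℕ) (h : ℝ) (φ : ℝ → E n → (ℝ → E n) → ℝ)
    (τ : ℝ) (z : E n) (w : ℝ → E n) (a : ℝ) (p : E n) : Prop :=
  ∀ x : ℝ → E n, InLambda I h τ z w x →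
    (fun q : ℝ × E n =>
        φ q.1 q.2 (shift x q.1) - φ τ z w - (q.1 - τ) * a - ⟪q.2 - z, p⟫_ℝ)
      =o[nhdsWithin (τ, z) (Set.Icc τ ((I:ℝ) * h) ×ˢ (Set.univ : Set (E n)))]
      fun q : ℝ × E n => |q.1 - τ| + ‖q.2 - z‖

/-- Lower right directional derivative `∂⁻_{(1,l)} φ(τ,z,w)` along `κ ∈ Λ₀`. -/
def dLow {n : ℕ} (φ : ℝ → E n → (ℝ → E n) → ℝ) (τ : ℝ) (z : E n) (w : ℝ → E n)
    (l : E n) (κ : ℝ → E n) : EReal :=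
  Filter.liminf
    (fun δ : ℝ =>
      (((φ (τ + δ) (z + δ • l) (shift κ (τ + δ)) - φ τ z w) / δ : ℝ) : EReal))
    (nhdsWithin 0 (Set.Ioi 0))

/-- Upper right directional derivative `∂⁺_{(1,l)} φ(τ,z,w)` along `κ ∈ Λ₀`. -/
def dUpp {n : ℕ} (φ : ℝ → E n → (ℝ → E n) → ℝ) (τ : ℝ) (z : E n) (w : ℝ → E n)
    (l : E n) (κ : ℝ → E n) : EReal :=
  Filter.limsup
    (fun δ : ℝ =>
      (((φ (τ + δ) (z + δ • l) (shift κ (τ + δ)) - φ τ z w) / δ : ℝ) : EReal))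
    (nhdsWithin 0 (Set.Ioi 0))

/-- `(p₀,p) ∈ D⁻φ(τ,z,w)`. -/
def InSubdiff {n : ℕ} (I : ℕ) (h : ℝ) (φ : ℝ → E n → (ℝ → E n) → ℝ)
    (τ : ℝ) (z : E n) (w : ℝ → E n) (p0 : ℝ) (p : E n) : Prop :=
  ∀ κ : ℝ → E n, InLambda0 I h τ z w κ →
    ∀ ε > 0, ∃ δ > 0, ∀ (t : ℝ) (x : E n),
      (t, x) ∈ OPlus δ τ z → (t, x) ≠ (τ, z) →
        -ε ≤ (φ t x (shift κ t) - φ τ z w - (t - τ) * p0 - ⟪x - z, p⟫_ℝ) /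
          (|t - τ| + ‖x - z‖)

/-- `(q₀,q) ∈ D⁺φ(τ,z,w)`. -/
def InSuperdiff {n : ℕ} (I : ℕ) (h : ℝ) (φ : ℝ → E n → (ℝ → E n) → ℝ)
    (τ : ℝ) (z : E n) (w : ℝ → E n) (q0 : ℝ) (q : E n) : Prop :=
  ∀ κ : ℝ → E n, InLambda0 I h τ z w κ →
    ∀ ε > 0, ∃ δ > 0, ∀ (t : ℝ) (x : E n),
      (t, x) ∈ OPlus δ τ z → (t, x) ≠ (τ, z) →
        (φ t x (shift κ t) - φ τ z w - (t - τ) * q0 - ⟪x - z, q⟫_ℝ) /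
          (|t - τ| + ‖x - z‖) ≤ ε

/-- The Dini (directional-derivative) form of the generalized solution:
statement (c) of Theorem `teo:equivalent_solutions`. -/
def DiniSol {n : ℕ} (I : ℕ) (h : ℝ) (g : ℝ → E n → E n)
    (H : ℝ → E n → E n → E n → ℝ) (cH : ℝ) (σf : E n → (ℝ → E n) → ℝ)
    (φ : ℝ → E n → (ℝ → E n) → ℝ) : Prop :=
  Phi1 I h φ ∧ Phi2 I h φ ∧ TermCond I h σf φ ∧
  ∀ (τ : ℝ) (z : E n) (w : ℝ → E n), InGstar I h τ w → ∀ s : E n,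
    ∀ κ : ℝ → E n, InLambda0 I h τ z w κ →
      (∀ ε > 0, ∃ l : E n, l - ciDg I h g τ w ∈ Fset cH 0 z (w (-h)) ∧
        dLow φ τ z w l κ +
          ((⟪ciDg I h g τ w, s⟫_ℝ + H τ z (w (-h)) s - ⟪l, s⟫_ℝ : ℝ) : EReal)
          ≤ ((ε : ℝ) : EReal)) ∧
      (∀ ε > 0, ∃ l : E n, l - ciDg I h g τ w ∈ Fset cH 0 z (w (-h)) ∧
        ((-ε : ℝ) : EReal) ≤ dUpp φ τ z w l κ +
          ((⟪ciDg I h g τ w, s⟫_ℝ + H τ z (w (-h)) s - ⟪l, s⟫_ℝ : ℝ) : EReal))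

/-- The sub/superdifferential form of the generalized solution:
statement (d) of Theorem `teo:equivalent_solutions`. -/
def SubSuperSol {n : ℕ} (I : ℕ) (h : ℝ) (g : ℝ → E n → E n)
    (H : ℝ → E n → E n → E n → ℝ) (σf : E n → (ℝ → E n) → ℝ)
    (φ : ℝ → E n → (ℝ → E n) → ℝ) : Prop :=
  Phi1 I h φ ∧ Phi2 I h φ ∧ TermCond I h σf φ ∧
  ∀ (τ : ℝ) (z : E n) (w : ℝ → E n), InGstar I h τ w →
    (∀ (p0 : ℝ) (p : E n), InSubdiff I h φ τ z w p0 p →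
      p0 + ⟪ciDg I h g τ w, p⟫_ℝ + H τ z (w (-h)) p ≤ 0) ∧
    (∀ (q0 : ℝ) (q : E n), InSuperdiff I h φ τ z w q0 q →
      0 ≤ q0 + ⟪ciDg I h g τ w, q⟫_ℝ + H τ z (w (-h)) q)

/-- `(w^j) ∈ Γ(z,w)`. -/
def InGamma {n : ℕ} (h : ℝ) (z : E n) (w : ℝ → E n) (ws : ℕ → ℝ → E n) : Prop :=
  (∀ j, IsLip h (ws j)) ∧
  Tendsto (fun j => norm1 h (fun ξ => w ξ - ws j ξ)) atTop (nhds 0) ∧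
  Tendsto (fun j => ‖z - leftLimit (ws j) 0‖) atTop (nhds 0) ∧
  ∀ ξ ∈ Set.Ico (-h) (0:ℝ), Tendsto (fun j => ‖w ξ - ws j ξ‖) atTop (nhds 0)

/-- Condition (w³) of Lemma `lem:Gamma_nonempty`. -/
def CondW3 {n : ℕ} (h : ℝ) (w : ℝ → E n) (ws : ℕ → ℝ → E n) : Prop :=
  ∀ ξ ∈ Set.Ioo (-h) (0:ℝ), leftLimit w ξ = w ξ →
    ∃ δ > 0, Tendsto
      (fun j => ⨆ ζ : Set.Icc (-δ) δ, ‖w (ξ + ζ.1) - ws j (ξ + ζ.1)‖)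
      atTop (nhds 0)

/-- `θ^α_γ(τ)` (with `λ_H = λ_H(α)`, `λ_g = λ_g(α)` given). -/
def thetaG (lamH lamg h γ τ : ℝ) : ℝ :=
  (Real.exp (-(4 * lamH + 2 * lamg / h) * τ) - γ) / γ

/-- `ν^α_{γ,ε}(τ,z,w)`. -/
def nuG {n : ℕ} (lamH lamg h γ ε τ : ℝ) (z : E n) (w : ℝ → E n) : ℝ :=
  thetaG lamH lamg h γ τ *
    (Real.sqrt (ε ^ 4 + ‖z‖ ^ 2) +
      2 * lamH * ∫ ξ in (-h)..(0:ℝ), (1 - 2 * lamg * ξ / h) * ‖w ξ‖)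

/-- `∇_z ν^α_{γ,ε}(τ,z,·)`. -/
def gradNuG {n : ℕ} (lamH lamg h γ ε τ : ℝ) (z : E n) : E n :=
  (thetaG lamH lamg h γ τ / Real.sqrt (ε ^ 4 + ‖z‖ ^ 2)) • z

/-- `Δy(t) = Δx(t) - g(t,x(t-h)) + g(t,x'(t-h))`. -/
def dY {n : ℕ} (h : ℝ) (g : ℝ → E n → E n) (x x' : ℝ → E n) : ℝ → E n :=
  fun t => (x t - x' t) - g t (x (t - h)) + g t (x' (t - h))

/-- `ΔH^α_{γ,ε}(ξ)`. -/
def dHdiff {n : ℕ} (lamH lamg h γ ε : ℝ) (g : ℝ → E n → E n)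
    (H : ℝ → E n → E n → E n → ℝ) (x x' : ℝ → E n) (ξ : ℝ) : ℝ :=
  H ξ (x ξ) (x (ξ - h)) (gradNuG lamH lamg h γ ε ξ (dY h g x x' ξ)) -
    H ξ (x' ξ) (x' (ξ - h)) (gradNuG lamH lamg h γ ε ξ (dY h g x x' ξ)) +
    ⟪dY h g x x' ξ, gradNuG lamH lamg h γ ε ξ (dY h g x x' ξ)⟫_ℝ

/-- Continuity of `φ̂ : [0,ϑ] × Lip → ℝ` with respect to the uniform norm. -/
def HatContinuous {n : ℕ} (I : ℕ) (h : ℝ) (φh : ℝ → (ℝ → E n) → ℝ) : Prop :=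
  ∀ τ ∈ Set.Icc (0:ℝ) ((I:ℝ) * h), ∀ w : ℝ → E n, IsLip h w → ∀ ε > 0, ∃ δ > 0,
    ∀ τ' ∈ Set.Icc (0:ℝ) ((I:ℝ) * h), ∀ w' : ℝ → E n, IsLip h w' →
      |τ' - τ| ≤ δ → (∀ ξ ∈ Set.Ico (-h) (0:ℝ), ‖w' ξ - w ξ‖ ≤ δ) →
        |φh τ' w' - φh τ w| ≤ ε

/-- The functional `φ̂` from Lemma `lem:ex_un_minimax_sol`: continuous w.r.t. the uniform
norm, satisfying the terminal condition on `Lip` and the two minimax inequalities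
over `X⁰`. -/
def HatSol {n : ℕ} (I : ℕ) (h : ℝ) (g : ℝ → E n → E n)
    (H : ℝ → E n → E n → E n → ℝ) (cH : ℝ) (σf : E n → (ℝ → E n) → ℝ)
    (φh : ℝ → (ℝ → E n) → ℝ) : Prop :=
  HatContinuous I h φh ∧
  (∀ w : ℝ → E n, IsLip h w → φh ((I:ℝ) * h) w = σf (leftLimit w 0) w) ∧
  ∀ τ ∈ Set.Ico (0:ℝ) ((I:ℝ) * h), ∀ w : ℝ → E n, IsLip h w →
    ∀ t ∈ Set.Ioc τ ((I:ℝ) * h), ∀ s : E n,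
      (∀ ε > 0, ∃ x : ℝ → E n, InX I h g cH 0 τ (leftLimit w 0) w x ∧
        φh t (shift x t) + omegaF h g H τ t x s ≤ φh τ w + ε) ∧
      (∀ ε > 0, ∃ x : ℝ → E n, InX I h g cH 0 τ (leftLimit w 0) w x ∧
        φh τ w - ε ≤ φh t (shift x t) + omegaF h g H τ t x s)

-- auxiliary machinery

def W0 (ω : ℝ → ℝ) : ℝ → ℝ := fun y => ∫ t in (0:ℝ)..y, ω t

def uu (ω : ℝ → ℝ) : ℝ → ℝ := fun y =>
  if y = 0 then 0 else (W0 ω (4*|y|) - W0 ω (2*|y|)) / y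

def zeta (ω : ℝ → ℝ) : ℝ → ℝ := fun d => ∫ y in (0:ℝ)..d, uu ω y

variable {ω : ℝ → ℝ}

lemma omega_ii (hmono : Monotone ω) : ∀ a b : ℝ, IntervalIntegrable ω volume a b :=
  fun _ _ => hmono.intervalIntegrable

lemma W0_cont (hmono : Monotone ω) : Continuous (W0 ω) :=
  intervalIntegral.continuous_primitive (omega_ii hmono) 0

lemma W0_sub (hmono : Monotone ω) (a b : ℝ) :
    W0 ω b - W0 ω a = ∫ t in a..b, ω t := by
  rw [W0, W0, ← intervalIntegral.integral_add_adjacent_intervals (omega_ii hmono 0 a)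
    (omega_ii hmono a b)]
  ring

lemma W0_diff_le (hmono : Monotone ω) {a b : ℝ} (hab : a ≤ b) :
    W0 ω b - W0 ω a ≤ (b - a) * ω b := by
  rw [W0_sub hmono]
  calc ∫ t in a..b, ω t ≤ ∫ _t in a..b, ω b := by
        apply intervalIntegral.integral_mono_on hab (omega_ii hmono a b)
          intervalIntegrable_const
        exact fun x hx => hmono hx.2
    _ = (b - a) * ω b := by simp [mul_comm]

lemma W0_le_diff (hmono : Monotone ω) {a b : ℝ} (hab : a ≤ b) :
    (b - a) * ω a ≤ W0 ω b - W0 ω a := by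
  rw [W0_sub hmono]
  calc (b - a) * ω a = ∫ _t in a..b, ω a := by simp [mul_comm]
    _ ≤ ∫ t in a..b, ω t := by
        apply intervalIntegral.integral_mono_on hab intervalIntegrable_const
          (omega_ii hmono a b)
        exact fun x hx => hmono hx.1

lemma uu_abs_le (hmono : Monotone ω) (hnn : ∀ d, 0 ≤ ω d) (y : ℝ) :
    |uu ω y| ≤ 2 * ω (4 * |y|) := by
  rcases eq_or_ne y 0 with rfl | hy
  · have h := hnn (4 * |(0:ℝ)|)
    simp [uu] at h ⊢
    linarith
  · have hyp : (0:ℝ) < |y| := abs_pos.2 hy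
    have h1 : (0:ℝ) ≤ W0 ω (4*|y|) - W0 ω (2*|y|) := by
      have := W0_le_diff hmono (by linarith : 2*|y| ≤ 4*|y|)
      nlinarith [hnn (2*|y|)]
    have h2 : W0 ω (4*|y|) - W0 ω (2*|y|) ≤ 2*|y| * ω (4*|y|) := by
      have := W0_diff_le hmono (by linarith : 2*|y| ≤ 4*|y|)
      nlinarith
    rw [uu, if_neg hy, abs_div, abs_of_nonneg h1]
    rw [div_le_iff₀ hyp]
    nlinarith

lemma uu_odd (y : ℝ) : uu ω (-y) = - uu ω y := by
  rcases eq_or_ne y 0 with rfl | hy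
  · simp [uu]
  · rw [uu, uu, if_neg (neg_ne_zero.2 hy), if_neg hy, abs_neg, div_neg]

lemma uu_nonneg (hmono : Monotone ω) (hnn : ∀ d, 0 ≤ ω d) {y : ℝ} (hy : 0 ≤ y) :
    0 ≤ uu ω y := by
  rcases eq_or_ne y 0 with rfl | hy0
  · simp [uu]
  · have hyp : 0 < y := lt_of_le_of_ne hy (Ne.symm hy0)
    rw [uu, if_neg hy0]
    apply div_nonneg _ hy
    have := W0_le_diff hmono (by rw [abs_of_nonneg hy]; linarith : 2*|y| ≤ 4*|y|)
    nlinarith [hnn (2*|y|), abs_nonneg y]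

lemma uu_lb (hmono : Monotone ω) {y : ℝ} (hy : 0 < y) : 2 * ω (2*y) ≤ uu ω y := by
  rw [uu, if_neg (ne_of_gt hy), abs_of_nonneg hy.le]
  rw [le_div_iff₀ hy]
  have := W0_le_diff hmono (by linarith : 2*y ≤ 4*y)
  nlinarith

lemma uu_cont (hmono : Monotone ω) (hnn : ∀ d, 0 ≤ ω d)
    (hlim : ∀ ε > 0, ∃ d₀ > 0, ∀ d ≤ d₀, ω d ≤ ε) : Continuous (uu ω) := by
  rw [continuous_iff_continuousAt]
  intro y
  rcases eq_or_ne y 0 with rfl | hy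
  · have h0 : uu ω 0 = 0 := by simp [uu]
    rw [ContinuousAt, h0, Metric.tendsto_nhds]
    intro ε hε
    obtain ⟨d₀, hd₀, hd⟩ := hlim (ε/4) (by linarith)
    have : Metric.ball (0:ℝ) (d₀/4) ∈ 𝓝 (0:ℝ) :=
      Metric.ball_mem_nhds _ (by linarith)
    filter_upwards [this] with x hx
    have hx4 : 4 * |x| ≤ d₀ := by
      have : |x| < d₀/4 := by simpa [Real.dist_eq] using hx
      linarith
    have := uu_abs_le hmono hnn x
    have := hd _ hx4
    rw [Real.dist_eq, sub_zero]
    calc |uu ω x| ≤ 2 * ω (4*|x|) := uu_abs_le hmono hnn x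
      _ ≤ 2 * (ε/4) := by linarith
      _ < ε := by linarith
  · have hev : ∀ᶠ x in 𝓝 y, ((W0 ω (4*|x|) - W0 ω (2*|x|)) / x) = uu ω x := by
      filter_upwards [isOpen_ne.mem_nhds hy] with x hx
      rw [uu, if_neg hx]
    apply ContinuousAt.congr _ hev
    apply ContinuousAt.div
    · exact ((W0_cont hmono).comp (by continuity)).sub
        ((W0_cont hmono).comp (by continuity)) |>.continuousAt
    · exact continuousAt_id
    · exact hy

lemma zeta_hasDeriv (hmono : Monotone ω) (hnn : ∀ d, 0 ≤ ω d)
    (hlim : ∀ ε > 0, ∃ d₀ > 0, ∀ d ≤ d₀, ω d ≤ ε) (y : ℝ) :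
    HasDerivAt (zeta ω) (uu ω y) y := by
  have hc := uu_cont hmono hnn hlim
  exact intervalIntegral.integral_hasDerivAt_right (hc.intervalIntegrable _ _)
    (hc.stronglyMeasurableAtFilter _ _) hc.continuousAt

lemma zeta_contDiff (hmono : Monotone ω) (hnn : ∀ d, 0 ≤ ω d)
    (hlim : ∀ ε > 0, ∃ d₀ > 0, ∀ d ≤ d₀, ω d ≤ ε) : ContDiff ℝ 1 (zeta ω) := by
  rw [contDiff_one_iff_deriv]
  constructor
  · exact fun y => (zeta_hasDeriv hmono hnn hlim y).differentiableAt
  · have : deriv (zeta ω) = uu ω := funext fun y => (zeta_hasDeriv hmono hnn hlim y).deriv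
    rw [this]; exact uu_cont hmono hnn hlim

lemma zeta_even (d : ℝ) : zeta ω (-d) = zeta ω d := by
  have h1 := intervalIntegral.integral_comp_neg (fun x => uu ω x) (a := 0) (b := d)
  simp only [neg_zero] at h1
  have h2 : (∫ x in (0:ℝ)..d, uu ω (-x)) = - zeta ω d := by
    rw [zeta, ← intervalIntegral.integral_neg]
    congr 1
    ext x
    rw [uu_odd]
  have h3 : (∫ x in (-d)..(0:ℝ), uu ω x) = - zeta ω (-d) := by
    rw [zeta, ← intervalIntegral.integral_symm]
  rw [h2, h3] at h1
  linarith

lemma zeta_zero : zeta ω 0 = 0 := by simp [zeta]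

lemma uu_zero : uu ω 0 = 0 := by simp [uu]

lemma zeta_nonneg (hmono : Monotone ω) (hnn : ∀ d, 0 ≤ ω d) (d : ℝ) :
    0 ≤ zeta ω d := by
  rcases le_total 0 d with hd | hd
  · exact intervalIntegral.integral_nonneg hd fun u hu => uu_nonneg hmono hnn hu.1
  · rw [← zeta_even]
    exact intervalIntegral.integral_nonneg (by linarith) fun u hu =>
      uu_nonneg hmono hnn hu.1

lemma zeta_lower (hmono : Monotone ω) (hnn : ∀ d, 0 ≤ ω d)
    (hlim : ∀ ε > 0, ∃ d₀ > 0, ∀ d ≤ d₀, ω d ≤ ε)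
    {d : ℝ} (hd : 0 ≤ d) : d * ω d ≤ zeta ω d := by
  rcases eq_or_lt_of_le hd with rfl | hd0
  · simp [zeta_zero]
  have hc := uu_cont hmono hnn hlim
  have hsplit : zeta ω d = (∫ y in (0:ℝ)..(d/2), uu ω y) + ∫ y in (d/2)..d, uu ω y := by
    rw [zeta, ← intervalIntegral.integral_add_adjacent_intervals
      (hc.intervalIntegrable _ _) (hc.intervalIntegrable _ _)]
  have h1 : 0 ≤ ∫ y in (0:ℝ)..(d/2), uu ω y :=
    intervalIntegral.integral_nonneg (by linarith) fun u hu => uu_nonneg hmono hnn hu.1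
  have h2 : (d/2) * (2 * ω d) ≤ ∫ y in (d/2)..d, uu ω y := by
    calc (d/2) * (2 * ω d) = ∫ _y in (d/2)..d, 2 * ω d := by
          rw [intervalIntegral.integral_const, smul_eq_mul]; ring
      _ ≤ ∫ y in (d/2)..d, uu ω y := by
          apply intervalIntegral.integral_mono_on (by linarith) intervalIntegrable_const
            (hc.intervalIntegrable _ _)
          intro x hx
          calc 2 * ω d ≤ 2 * ω (2*x) := by
                have := hmono (show d ≤ 2*x by linarith [hx.1])
                linarith
            _ ≤ uu ω x := uu_lb hmono (by linarith [hx.1])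
  nlinarith

def omSet {Q : Type*} (A : Set Q) (f rr : Q → ℝ) (d : ℝ) : Set ℝ :=
  insert (0:ℝ) {c | ∃ q ∈ A, 0 < rr q ∧ rr q ≤ d ∧ c = |f q| / rr q}

def omOf {Q : Type*} (A : Set Q) (f rr : Q → ℝ) : ℝ → ℝ := fun d => sSup (omSet A f rr d)

variable {Q : Type*} {A : Set Q} {f rr : Q → ℝ}

lemma omSet_le_one (hP1 : ∀ q ∈ A, |f q| ≤ rr q) (d : ℝ) : ∀ c ∈ omSet A f rr d, c ≤ 1 := by
  intro c hc
  rcases hc with rfl | ⟨q, hqA, hq0, _, rfl⟩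
  · norm_num
  · rw [div_le_one hq0]
    exact hP1 q hqA

lemma omSet_bddAbove (hP1 : ∀ q ∈ A, |f q| ≤ rr q) (d : ℝ) : BddAbove (omSet A f rr d) :=
  ⟨1, fun _ hc => omSet_le_one hP1 d _ hc⟩

lemma omSet_nonempty (d : ℝ) : (omSet A f rr d).Nonempty := ⟨0, Set.mem_insert 0 _⟩

lemma omOf_nonneg (hP1 : ∀ q ∈ A, |f q| ≤ rr q) (d : ℝ) : 0 ≤ omOf A f rr d :=
  le_csSup (omSet_bddAbove hP1 d) (Set.mem_insert 0 _)

lemma omOf_mono (hP1 : ∀ q ∈ A, |f q| ≤ rr q) : Monotone (omOf A f rr) := by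
  intro d d' hdd'
  apply csSup_le_csSup (omSet_bddAbove hP1 d') (omSet_nonempty d)
  intro c hc
  rcases hc with rfl | ⟨q, hqA, hq0, hqd, rfl⟩
  · exact Set.mem_insert 0 _
  · exact Set.mem_insert_of_mem _ ⟨q, hqA, hq0, le_trans hqd hdd', rfl⟩

lemma omOf_point (hP1 : ∀ q ∈ A, |f q| ≤ rr q) {q : Q} (hq : q ∈ A) (hq0 : 0 ≤ rr q) :
    |f q| ≤ omOf A f rr (rr q) * rr q := by
  rcases eq_or_lt_of_le hq0 with h0 | h0
  · have h1 := hP1 q hq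
    rw [← h0, mul_zero]
    rw [← h0] at h1
    exact h1
  · have hmem : |f q| / rr q ∈ omSet A f rr (rr q) :=
      Set.mem_insert_of_mem _ ⟨q, hq, h0, le_rfl, rfl⟩
    have := le_csSup (omSet_bddAbove hP1 _) hmem
    exact (div_le_iff₀ h0).1 this

lemma omOf_small (hP1 : ∀ q ∈ A, |f q| ≤ rr q)
    (hsm : ∀ ε > 0, ∃ d₀ > 0, ∀ q ∈ A, rr q ≤ d₀ → |f q| ≤ ε * rr q) :
    ∀ ε > 0, ∃ d₀ > 0, ∀ d ≤ d₀, omOf A f rr d ≤ ε := by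
  intro ε hε
  obtain ⟨d₀, hd₀, hd⟩ := hsm ε hε
  refine ⟨d₀, hd₀, fun d hdd₀ => csSup_le (omSet_nonempty d) ?_⟩
  intro c hc
  rcases hc with rfl | ⟨q, hqA, hq0, hqd, rfl⟩
  · exact hε.le
  · rw [div_le_iff₀ hq0]
    linarith [hd q hqA (le_trans hqd hdd₀)]
-- κ construction
lemma kappa_lambda0 {n : ℕ} (I : ℕ) {h τ : ℝ} (z : E n) {w : ℝ → E n}
    (hw : IsPLip h w) (hτϑ : τ < (I:ℝ) * h) :
    InLambda0 I h τ z w (fun t => if t < τ then w (t - τ) else z) := by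
  obtain ⟨k, ξ, hk, hξ0, hξk, hinc, hlip⟩ := hw
  have hmono0 : ∀ (m i : ℕ), i + m ≤ k → ξ i ≤ ξ (i + m) := by
    intro m
    induction m with
    | zero => simp
    | succ m ih =>
      intro i hik
      calc ξ i ≤ ξ (i + m) := ih i (by omega)
        _ ≤ ξ (i + m + 1) := (hinc _ (by omega)).le
        _ = ξ (i + (m + 1)) := by rw [Nat.add_assoc]
  have hmono : ∀ i, i ≤ k → ξ i ≤ ξ k := by
    intro i hi
    have := hmono0 (k - i) i (by omega)
    rwa [show i + (k - i) = k by omega] at this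
  refine ⟨⟨⟨k+1, fun i => if i ≤ k then ξ i + τ else (I:ℝ)*h, Nat.succ_pos k, ?_, ?_, ?_, ?_⟩,
      ?_, ?_⟩, ?_⟩
  · simp only [if_pos (Nat.zero_le k), hξ0]
    ring
  · simp only [if_neg (Nat.not_succ_le_self k)]
  · intro i hik
    rcases Nat.lt_or_ge i k with hi | hi
    · simp only [if_pos hi.le, if_pos (Nat.succ_le_of_lt hi)]
      linarith [hinc i hi]
    · have hik' : i = k := le_antisymm (Nat.lt_succ_iff.1 hik) hi
      subst hik'
      simp only [if_pos le_rfl, if_neg (Nat.not_succ_le_self i), hξk]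
      linarith
  · intro i hik
    rcases Nat.lt_or_ge i k with hi | hi
    · obtain ⟨K, hK⟩ := hlip i hi
      refine ⟨K, ?_⟩
      simp only [if_pos hi.le, if_pos (Nat.succ_le_of_lt hi)]
      intro s hs t ht
      have hξi1 : ξ (i+1) ≤ 0 := by
        have := hmono (i+1) (Nat.succ_le_of_lt hi)
        rw [hξk] at this; exact this
      have hsτ : s - τ ∈ Set.Ico (ξ i) (ξ (i+1)) := ⟨by linarith [hs.1], by linarith [hs.2]⟩
      have htτ : t - τ ∈ Set.Ico (ξ i) (ξ (i+1)) := ⟨by linarith [ht.1], by linarith [ht.2]⟩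
      have hsl : s < τ := by have := hs.2; linarith
      have htl : t < τ := by have := ht.2; linarith
      simp only [if_pos hsl, if_pos htl]
      have harg : edist (s - τ) (t - τ) = edist s t := by
        rw [edist_eq_enorm_sub, edist_eq_enorm_sub]
        congr 1
        rw [show (s - τ) - (t - τ) = s - t by ring]
      calc edist (w (s - τ)) (w (t - τ)) ≤ K * edist (s - τ) (t - τ) := hK hsτ htτ
        _ = K * edist s t := by rw [harg]
    · have hik' : i = k := le_antisymm (Nat.lt_succ_iff.1 hik) hi
      subst hik'
      refine ⟨0, ?_⟩
      simp only [if_pos le_rfl, if_neg (Nat.not_succ_le_self i), hξk]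
      intro s hs t ht
      have hs' : ¬ s < τ := not_lt.2 (by have := hs.1; linarith)
      have ht' : ¬ t < τ := not_lt.2 (by have := ht.1; linarith)
      simp [if_neg hs', if_neg ht']
  · simp
  · intro t ht
    simp [if_pos ht.2]
  · intro t ht
    simp [if_neg (not_lt.2 ht.1)]

-- coordinate lemma
lemma coord_large {n : ℕ} (hn : 1 ≤ n) (y : E n) : ∃ i, ‖y‖ / n ≤ |y i| := by
  have hne : (Finset.univ : Finset (Fin n)).Nonempty := by
    rw [Finset.univ_nonempty_iff]
    exact Fin.pos_iff_nonempty.1 hn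
  rcases eq_or_lt_of_le (norm_nonneg y) with h0 | h0
  · obtain ⟨i, _⟩ := hne
    refine ⟨i, ?_⟩
    rw [← h0]
    simp [abs_nonneg]
  · by_contra hc
    push_neg at hc
    have hsq : ‖y‖ ^ 2 = ∑ i, ‖y i‖ ^ 2 := by
      rw [EuclideanSpace.norm_eq, Real.sq_sqrt]
      positivity
    have hlt : ∑ i, ‖y i‖ ^ 2 < ∑ _i : Fin n, (‖y‖ / n) ^ 2 := by
      apply Finset.sum_lt_sum_of_nonempty hne
      intro i _
      have h1 := hc i
      have h2 : ‖y i‖ = |y i| := rfl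
      rw [h2]
      exact pow_lt_pow_left₀ h1 (abs_nonneg _) (by norm_num)
    have hsum : ∑ _i : Fin n, (‖y‖ / n) ^ 2 = n * (‖y‖ / n) ^ 2 := by
      rw [Finset.sum_const, Finset.card_univ, Fintype.card_fin, nsmul_eq_mul]
    have hn1 : (1:ℝ) ≤ n := by exact_mod_cast hn
    rw [hsum] at hlt
    rw [← hsq] at hlt
    have heq : (n:ℝ) * (‖y‖/n)^2 = ‖y‖^2 / n := by
      field_simp
    rw [heq] at hlt
    have : ‖y‖^2 / n ≤ ‖y‖^2 := by
      rw [div_le_iff₀ (by linarith)]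
      nlinarith
    linarith


lemma littleO_ball {α : Type*} [PseudoMetricSpace α] {q₀ : α} {S : Set α} {f rr : α → ℝ}
    (hrr0 : ∀ q, 0 ≤ rr q) (hf : f =o[nhdsWithin q₀ S] rr) {c : ℝ} (hc : 0 < c) :
    ∃ ε > 0, ∀ q ∈ Metric.ball q₀ ε ∩ S, |f q| ≤ c * rr q := by
  have h1 := hf.def hc
  obtain ⟨ε, hε, hb⟩ := Metric.mem_nhdsWithin_iff.1 h1
  refine ⟨ε, hε, fun q hq => ?_⟩
  have h2 : ‖f q‖ ≤ c * ‖rr q‖ := hb hq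
  rwa [Real.norm_eq_abs, Real.norm_eq_abs, abs_of_nonneg (hrr0 q)] at h2

/-- Theorem `teo:classical_and_viscosity_solutions` (a): the viscosity solution
satisfies the Hamilton–Jacobi equation at every point of `𝔾_*` where it is
ci-differentiable. -/
theorem viscosity_solution_satisfies_HJ_at_ci_differentiability_points
    {n : ℕ} (hn : 1 ≤ n) (I : ℕ) (hI : 1 ≤ I) (h : ℝ) (hh : 0 < h)
    (g : ℝ → E n → E n) (H : ℝ → E n → E n → E n → ℝ) (cH : ℝ)
    (σf : E n → (ℝ → E n) → ℝ)
    (hg : CondG I h g) (hH1 : CondH1 I h H) (hH2 : CondH2 I h cH H)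
    (hH3 : CondH3 I h H) (hσ : CondSigma h σf)
    (φ : ℝ → E n → (ℝ → E n) → ℝ) (hφ : IsViscositySol I h g H σf φ)
    (τ : ℝ) (z : E n) (w : ℝ → E n) (hG : InGstar I h τ w)
    (a : ℝ) (p : E n) (hd : HasCiDeriv I h φ τ z w a p) :
    a + ⟪ciDg I h g τ w, p⟫_ℝ + H τ z (w (-h)) p = 0 := by
  classical
  obtain ⟨i0, hi0I, hτio⟩ := hG.1
  have hwPLs := hG.2
  have hϑτ : τ < (I:ℝ) * h := by
    have h1 : ((i0:ℝ) + 1) * h ≤ (I:ℝ) * h := by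
      apply mul_le_mul_of_nonneg_right _ hh.le
      exact_mod_cast Nat.succ_le_of_lt hi0I
    exact lt_of_lt_of_le hτio.2 h1
  set κ : ℝ → E n := fun t => if t < τ then w (t - τ) else z with hκdef
  have hκ : InLambda0 I h τ z w κ := kappa_lambda0 I z hwPLs.1 hϑτ
  have hf := hd κ hκ.1
  set S : Set (ℝ × E n) := Set.Icc τ ((I:ℝ)*h) ×ˢ (Set.univ : Set (E n)) with hSdef
  set ff : ℝ × E n → ℝ := fun q =>
    φ q.1 q.2 (shift κ q.1) - φ τ z w - (q.1 - τ) * a - ⟪q.2 - z, p⟫_ℝ with hffdef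
  set rr : ℝ × E n → ℝ := fun q => |q.1 - τ| + ‖q.2 - z‖ with hrrdef
  have hfo : ff =o[nhdsWithin ((τ, z) : ℝ × E n) S] rr := hf
  have hrr0 : ∀ q : ℝ × E n, 0 ≤ rr q := fun q => add_nonneg (abs_nonneg _) (norm_nonneg _)
  obtain ⟨ε₀, hε₀, hball⟩ := littleO_ball hrr0 hfo one_pos
  set δ₁ : ℝ := min (ε₀ / 2) ((I:ℝ)*h - τ) with hδ₁def
  have hδ₁pos : 0 < δ₁ := lt_min (by linarith) (by linarith)
  have hδ₁ε : δ₁ < ε₀ := lt_of_le_of_lt (min_le_left _ _) (by linarith)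
  have hδ₁ϑ : τ + δ₁ ≤ (I:ℝ)*h := by
    have h2 : δ₁ ≤ (I:ℝ)*h - τ := min_le_right _ _
    linarith
  have hOS : ∀ q ∈ OPlus δ₁ τ z, q ∈ S := by
    rintro ⟨t, x⟩ hq
    exact ⟨⟨hq.1.1, le_trans hq.1.2 hδ₁ϑ⟩, trivial⟩
  have hdist_rr : ∀ q ∈ OPlus δ₁ τ z, dist q ((τ, z) : ℝ × E n) ≤ rr q := by
    rintro ⟨t, x⟩ hq
    rw [Prod.dist_eq]
    apply max_le
    · rw [Real.dist_eq]
      show |t - τ| ≤ |t - τ| + ‖x - z‖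
      linarith [norm_nonneg (x - z)]
    · rw [dist_eq_norm]
      show ‖x - z‖ ≤ |t - τ| + ‖x - z‖
      linarith [abs_nonneg (t - τ)]
  have hdist_δ : ∀ q ∈ OPlus δ₁ τ z, dist q ((τ, z) : ℝ × E n) ≤ δ₁ := by
    rintro ⟨t, x⟩ hq
    rw [Prod.dist_eq]
    apply max_le
    · rw [Real.dist_eq, abs_of_nonneg (by linarith [hq.1.1] : (0:ℝ) ≤ t - τ)]
      linarith [hq.1.2]
    · rw [dist_eq_norm]
      exact hq.2
  have P1 : ∀ q ∈ OPlus δ₁ τ z, |ff q| ≤ rr q := by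
    intro q hq
    have h2 := hball q ⟨Metric.mem_ball.2 (lt_of_le_of_lt (hdist_δ q hq) hδ₁ε), hOS q hq⟩
    linarith
  have hsmall : ∀ ε > 0, ∃ d₀ > 0, ∀ q ∈ OPlus δ₁ τ z, rr q ≤ d₀ → |ff q| ≤ ε * rr q := by
    intro ε hε
    obtain ⟨ε₁, hε₁, hb⟩ := littleO_ball hrr0 hfo hε
    refine ⟨ε₁ / 2, by linarith, ?_⟩
    intro q hq hqd
    exact hb q ⟨Metric.mem_ball.2 (lt_of_le_of_lt (le_trans (hdist_rr q hq) hqd)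
      (by linarith)), hOS q hq⟩
  set ωf : ℝ → ℝ := omOf (OPlus δ₁ τ z) ff rr with hωdef
  have hMω : Monotone ωf := omOf_mono P1
  have hNω : ∀ d, 0 ≤ ωf d := fun d => omOf_nonneg P1 d
  have hLω : ∀ ε > 0, ∃ d₀ > 0, ∀ d ≤ d₀, ωf d ≤ ε := omOf_small P1 hsmall
  have hpt : ∀ q ∈ OPlus δ₁ τ z, |ff q| ≤ ωf (rr q) * rr q :=
    fun q hq => omOf_point P1 hq (hrr0 q)
  have hdom : ∀ (t : ℝ) (x : E n), (t, x) ∈ OPlus δ₁ τ z →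
      |ff (t, x)| ≤ zeta ωf (2*(t - τ)) + ∑ i, zeta ωf (2*(n:ℝ)*(x i - z i)) := by
    intro t x hq
    have hs0 : 0 ≤ t - τ := by linarith [hq.1.1]
    have hm0 : 0 ≤ ‖x - z‖ := norm_nonneg _
    have hfb := hpt (t, x) hq
    have hrrtx : rr (t, x) = |t - τ| + ‖x - z‖ := rfl
    have habs : |t - τ| = t - τ := abs_of_nonneg hs0
    have hsumnn : 0 ≤ ∑ i, zeta ωf (2*(n:ℝ)*(x i - z i)) :=
      Finset.sum_nonneg fun i _ => zeta_nonneg hMω hNω _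
    have hznn : 0 ≤ zeta ωf (2*(t - τ)) := zeta_nonneg hMω hNω _
    rcases le_or_gt ‖x - z‖ (t - τ) with hc | hc
    · have h2s : rr (t, x) ≤ 2*(t - τ) := by rw [hrrtx, habs]; linarith
      have hmm : ωf (rr (t, x)) * rr (t, x) ≤ ωf (2*(t - τ)) * (2*(t - τ)) :=
        mul_le_mul (hMω h2s) h2s (hrr0 _) (hNω _)
      have hz := zeta_lower hMω hNω hLω (by linarith : (0:ℝ) ≤ 2*(t - τ))
      linarith
    · obtain ⟨i, hi⟩ := coord_large hn (x - z)
      have hxz : (x - z) i = x i - z i := rfl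
      rw [hxz] at hi
      have hn0 : (0:ℝ) < n := by
        have : (1:ℝ) ≤ n := by exact_mod_cast hn
        linarith
      have hmpos : 0 < ‖x - z‖ := lt_of_le_of_lt hs0 hc
      have hcoord : 2*‖x - z‖ ≤ 2*(n:ℝ)*|x i - z i| := by
        rw [div_le_iff₀ hn0] at hi
        nlinarith
      have hrr2 : rr (t, x) ≤ 2*(n:ℝ)*|x i - z i| := by
        rw [hrrtx, habs]
        linarith
      have hzeven : zeta ωf (2*(n:ℝ)*(x i - z i)) = zeta ωf (2*(n:ℝ)*|x i - z i|) := by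
        rcases abs_cases (x i - z i) with ⟨he, _⟩ | ⟨he, _⟩
        · rw [he]
        · rw [he, show 2*(n:ℝ)*(-(x i - z i)) = -(2*(n:ℝ)*(x i - z i)) by ring, zeta_even]
      have hzl := zeta_lower hMω hNω hLω
        (by positivity : (0:ℝ) ≤ 2*(n:ℝ)*|x i - z i|)
      have hmm : ωf (rr (t, x)) * rr (t, x) ≤
          ωf (2*(n:ℝ)*|x i - z i|) * (2*(n:ℝ)*|x i - z i|) :=
        mul_le_mul (hMω hrr2) hrr2 (hrr0 _) (hNω _)
      have hsingle : zeta ωf (2*(n:ℝ)*(x i - z i)) ≤ ∑ j, zeta ωf (2*(n:ℝ)*(x j - z j)) :=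
        Finset.single_le_sum (f := fun j : Fin n => zeta ωf (2*(n:ℝ)*(x j - z j)))
          (fun j _ => zeta_nonneg hMω hNω _) (Finset.mem_univ i)
      rw [hzeven] at hsingle
      linarith
  set pm : ℝ → E n → ℝ := fun t x => (t - τ)*a + ⟪x - z, p⟫_ℝ -
    (zeta ωf (2*(t - τ)) + ∑ i, zeta ωf (2*(n:ℝ)*(x i - z i))) with hpmdef
  set pp : ℝ → E n → ℝ := fun t x => (t - τ)*a + ⟪x - z, p⟫_ℝ +
    (zeta ωf (2*(t - τ)) + ∑ i, zeta ωf (2*(n:ℝ)*(x i - z i))) with hppdef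
  have hzC1 : ContDiff ℝ 1 (zeta ωf) := zeta_contDiff hMω hNω hLω
  have hlin : ContDiff ℝ 1 (fun q : ℝ × E n => (q.1 - τ)*a + ⟪q.2 - z, p⟫_ℝ) :=
    ((contDiff_fst.sub contDiff_const).mul contDiff_const).add
      ((contDiff_snd.sub contDiff_const).inner ℝ contDiff_const)
  have hpenC1 : ContDiff ℝ 1 (fun q : ℝ × E n =>
      zeta ωf (2*(q.1 - τ)) + ∑ i, zeta ωf (2*(n:ℝ)*(q.2 i - z i))) := by
    apply ContDiff.add
    · exact hzC1.comp (contDiff_const.mul (contDiff_fst.sub contDiff_const))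
    · apply ContDiff.sum
      intro i _
      exact hzC1.comp (contDiff_const.mul
        (((EuclideanSpace.proj (𝕜 := ℝ) i).contDiff.comp contDiff_snd).sub contDiff_const))
  have hC1m : ContDiff ℝ 1 (Function.uncurry pm) := by
    have heq : Function.uncurry pm = fun q : ℝ × E n => ((q.1 - τ)*a + ⟪q.2 - z, p⟫_ℝ) -
        (zeta ωf (2*(q.1 - τ)) + ∑ i, zeta ωf (2*(n:ℝ)*(q.2 i - z i))) := rfl
    rw [heq]
    exact hlin.sub hpenC1
  have hC1p : ContDiff ℝ 1 (Function.uncurry pp) := by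
    have heq : Function.uncurry pp = fun q : ℝ × E n => ((q.1 - τ)*a + ⟪q.2 - z, p⟫_ℝ) +
        (zeta ωf (2*(q.1 - τ)) + ∑ i, zeta ωf (2*(n:ℝ)*(q.2 i - z i))) := rfl
    rw [heq]
    exact hlin.add hpenC1
  -- time derivative
  have hdin : HasDerivAt (fun r : ℝ => zeta ωf (2*(r - τ))) 0 τ := by
    have hin : HasDerivAt (fun r : ℝ => 2*(r - τ)) 2 τ := by
      simpa using ((hasDerivAt_id τ).sub_const τ).const_mul (2:ℝ)
    have hout := zeta_hasDeriv hMω hNω hLω (2*(τ - τ))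
    have hcomp := HasDerivAt.comp τ hout hin
    rw [show 2*(τ - τ) = 0 by ring, uu_zero, zero_mul] at hcomp
    exact hcomp
  have h1a : HasDerivAt (fun r : ℝ => (r - τ)*a) a τ := by
    simpa using ((hasDerivAt_id τ).sub_const τ).mul_const a
  have hdm : HasDerivAt (fun r => pm r z) a τ := by
    have h2 := (h1a.add_const (⟪z - z, p⟫_ℝ)).sub
      (hdin.add_const (∑ i, zeta ωf (2*(n:ℝ)*(z i - z i))))
    rw [sub_zero] at h2
    exact h2
  have hdp : HasDerivAt (fun r => pp r z) a τ := by
    have h2 := (h1a.add_const (⟪z - z, p⟫_ℝ)).add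
      (hdin.add_const (∑ i, zeta ωf (2*(n:ℝ)*(z i - z i))))
    rw [add_zero] at h2
    exact h2
  have hderivm : deriv (fun r => pm r z) τ = a := hdm.deriv
  have hderivp : deriv (fun r => pp r z) τ = a := hdp.deriv
  -- gradient
  have hDsum : HasFDerivAt (fun x : E n => ∑ i, zeta ωf (2*(n:ℝ)*(x i - z i)))
      (0 : E n →L[ℝ] ℝ) z := by
    have hterm : ∀ i : Fin n, HasFDerivAt (fun x : E n => zeta ωf (2*(n:ℝ)*(x i - z i)))
        (0 : E n →L[ℝ] ℝ) z := by
      intro i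
      have h1 : HasFDerivAt (fun x : E n => x i)
          ((EuclideanSpace.proj (𝕜 := ℝ) i : E n →L[ℝ] ℝ)) z :=
        (EuclideanSpace.proj (𝕜 := ℝ) i).hasFDerivAt
      have h2 : HasFDerivAt (fun x : E n => 2*(n:ℝ)*(x i - z i))
          (((2*(n:ℝ)) • (EuclideanSpace.proj (𝕜 := ℝ) i) : E n →L[ℝ] ℝ)) z :=
        (h1.sub_const (z i)).const_mul (2*(n:ℝ))
      have hout := zeta_hasDeriv hMω hNω hLω (2*(n:ℝ)*(z i - z i))
      have hcomp := hout.comp_hasFDerivAt z h2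
      rw [show 2*(n:ℝ)*(z i - z i) = 0 by ring, uu_zero, zero_smul] at hcomp
      exact hcomp
    have h3 := HasFDerivAt.fun_sum (u := Finset.univ) (fun i _ => hterm i)
    simpa using h3
  have hDlin : HasFDerivAt (fun x : E n => ⟪x - z, p⟫_ℝ)
      (((InnerProductSpace.toDual ℝ (E n)) p : E n →L[ℝ] ℝ)) z := by
    have heq : (fun x : E n => ⟪x - z, p⟫_ℝ) =
        fun x : E n => ((InnerProductSpace.toDual ℝ (E n)) p) x - ⟪z, p⟫_ℝ := by
      funext x
      rw [InnerProductSpace.toDual_apply_apply, inner_sub_left, real_inner_comm]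
    rw [heq]
    exact (((InnerProductSpace.toDual ℝ (E n)) p) : E n →L[ℝ] ℝ).hasFDerivAt.sub_const _
  have hFm : HasFDerivAt (pm τ) (((InnerProductSpace.toDual ℝ (E n)) p : E n →L[ℝ] ℝ)) z := by
    have hc1 : HasFDerivAt (fun _ : E n => (τ - τ)*a) (0 : E n →L[ℝ] ℝ) z :=
      hasFDerivAt_const _ _
    have hc2 : HasFDerivAt (fun _ : E n => zeta ωf (2*(τ - τ))) (0 : E n →L[ℝ] ℝ) z :=
      hasFDerivAt_const _ _
    have h3 := (hc1.add hDlin).sub (hc2.add hDsum)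
    simp only [zero_add, add_zero, sub_zero] at h3
    exact h3
  have hFp : HasFDerivAt (pp τ) (((InnerProductSpace.toDual ℝ (E n)) p : E n →L[ℝ] ℝ)) z := by
    have hc1 : HasFDerivAt (fun _ : E n => (τ - τ)*a) (0 : E n →L[ℝ] ℝ) z :=
      hasFDerivAt_const _ _
    have hc2 : HasFDerivAt (fun _ : E n => zeta ωf (2*(τ - τ))) (0 : E n →L[ℝ] ℝ) z :=
      hasFDerivAt_const _ _
    have h3 := (hc1.add hDlin).add (hc2.add hDsum)
    simp only [zero_add, add_zero] at h3
    exact h3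
  have hgradm : gradient (pm τ) z = p := (hasGradientAt_iff_hasFDerivAt.2 hFm).gradient
  have hgradp : gradient (pp τ) z = p := (hasGradientAt_iff_hasFDerivAt.2 hFp).gradient
  -- comparison hypotheses
  have hpmτz : pm τ z = 0 := by
    rw [hpmdef]
    simp [zeta_zero]
  have hppτz : pp τ z = 0 := by
    rw [hppdef]
    simp [zeta_zero]
  have hhypm : ∀ (t : ℝ) (x : E n), (t, x) ∈ OPlus δ₁ τ z →
      φ τ z w - pm τ z ≤ φ t x (shift κ t) - pm t x := by
    intro t x hO
    have hfd := hdom t x hO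
    have hf1 : ff (t, x) = φ t x (shift κ t) - φ τ z w - (t - τ)*a - ⟪x - z, p⟫_ℝ := rfl
    have hp1 : pm t x = (t - τ)*a + ⟪x - z, p⟫_ℝ -
        (zeta ωf (2*(t - τ)) + ∑ i, zeta ωf (2*(n:ℝ)*(x i - z i))) := rfl
    have h2 := (abs_le.1 hfd).1
    rw [hf1] at h2
    rw [hpmτz, hp1]
    linarith
  have hhypp : ∀ (t : ℝ) (x : E n), (t, x) ∈ OPlus δ₁ τ z →
      φ t x (shift κ t) - pp t x ≤ φ τ z w - pp τ z := by
    intro t x hO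
    have hfd := hdom t x hO
    have hf1 : ff (t, x) = φ t x (shift κ t) - φ τ z w - (t - τ)*a - ⟪x - z, p⟫_ℝ := rfl
    have hp1 : pp t x = (t - τ)*a + ⟪x - z, p⟫_ℝ +
        (zeta ωf (2*(t - τ)) + ∑ i, zeta ωf (2*(n:ℝ)*(x i - z i))) := rfl
    have h2 := (abs_le.1 hfd).2
    rw [hf1] at h2
    rw [hppτz, hp1]
    linarith
  have hsub := hφ.2.2.2.1 τ z w hG pm hC1m δ₁ hδ₁pos κ hκ hhypm
  have hsup := hφ.2.2.2.2 τ z w hG pp hC1p δ₁ hδ₁pos κ hκ hhypp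
  rw [hderivm, hgradm] at hsub
  rw [hderivp, hgradp] at hsup
  linarith
end
end

section
/- Let φ : 𝔾 → ℝ be ci-differentiable at every point (τ,z,w) ∈ 𝔾_*, satisfy the Hamilton–Jacobi equation ∂^{ci}_{τ,w}φ(τ,z,w) + ⟨∂^{ci}_{τ,w} g(τ,w), ∇_z φ(τ,z,w)⟩ + H(τ,z,w(−h), ∇_z φ(τ,z,w)) = 0 at every point of 𝔾_*, and satisfy conditions (φ1), (φ2) and the terminal condition. Then φ is the viscosity solution of the Cauchy problem. -/
open Filter Set MeasureTheory Asymptotics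
open scoped InnerProductSpace Topology

noncomputable section

/-- If `e(s) = o(s)` as `s → 0⁺` and `0 ≤ s·C + e(s)` eventually, then `0 ≤ C`. -/
lemma aux_nonneg {C : ℝ} {e : ℝ → ℝ}
    (he : e =o[nhdsWithin (0:ℝ) (Set.Ioi 0)] fun s => s)
    (hineq : ∀ᶠ s in nhdsWithin (0:ℝ) (Set.Ioi 0), 0 ≤ s * C + e s) : 0 ≤ C := by
  by_contra hC
  push_neg at hC
  have hc : (0:ℝ) < -C / 2 := by linarith
  have h2 := he.def hc
  have h3 : ∀ᶠ s in nhdsWithin (0:ℝ) (Set.Ioi 0), s ∈ Set.Ioi (0:ℝ) :=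
    self_mem_nhdsWithin
  obtain ⟨s, hs1, hs2, hs3⟩ := (hineq.and (h2.and h3)).exists
  rw [Set.mem_Ioi] at hs3
  simp only [Real.norm_eq_abs, abs_of_pos hs3] at hs2
  nlinarith [le_trans (le_abs_self (e s)) hs2, mul_pos hs3 hc]

/-- The key first-order comparison: if a quantity `(t-τ)·A + ⟪x-z,B⟫ + e(t,x)` is
nonnegative on a right neighborhood, with `e` little-o, then `0 ≤ A` and `B = 0`. -/
lemma key_nonneg {n : ℕ} {ϑ τ : ℝ} (hτ : τ < ϑ) (z : E n) (A : ℝ) (B : E n)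
    {e : ℝ × E n → ℝ}
    (he : e =o[nhdsWithin ((τ, z) : ℝ × E n)
        (Set.Icc τ ϑ ×ˢ (Set.univ : Set (E n)))]
      fun q => |q.1 - τ| + ‖q.2 - z‖)
    (hineq : ∀ᶠ q : ℝ × E n in nhdsWithin (τ, z)
        (Set.Icc τ ϑ ×ˢ (Set.univ : Set (E n))),
      0 ≤ (q.1 - τ) * A + ⟪q.2 - z, B⟫_ℝ + e q) :
    0 ≤ A ∧ B = 0 := by
  have hA : 0 ≤ A := by
    have hfA : Filter.Tendsto (fun s : ℝ => ((τ + s, z) : ℝ × E n))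
        (nhdsWithin 0 (Set.Ioi 0))
        (nhdsWithin (τ, z) (Set.Icc τ ϑ ×ˢ (Set.univ : Set (E n)))) := by
      rw [tendsto_nhdsWithin_iff]
      constructor
      · have hcont : Continuous (fun s : ℝ => ((τ + s, z) : ℝ × E n)) :=
          (continuous_const.add continuous_id).prodMk continuous_const
        exact (hcont.tendsto' 0 (τ, z) (by simp)).mono_left nhdsWithin_le_nhds
      · filter_upwards [Ioo_mem_nhdsGT_of_mem
          (Set.left_mem_Ico.2 (sub_pos.2 hτ))] with s hs
        have hs1 : 0 < s := hs.1
        have hs2 : s < ϑ - τ := hs.2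
        refine ⟨⟨?_, ?_⟩, Set.mem_univ _⟩
        · show τ ≤ τ + s; linarith
        · show τ + s ≤ ϑ; linarith
    have heA := he.comp_tendsto hfA
    have heA' : (fun s : ℝ => e (τ + s, z)) =o[nhdsWithin (0:ℝ) (Set.Ioi 0)]
        fun s : ℝ => s := by
      refine heA.trans_isBigO (Asymptotics.IsBigO.of_bound 1 ?_)
      filter_upwards [self_mem_nhdsWithin] with s hs
      rw [Set.mem_Ioi] at hs
      have h1 : τ + s - τ = s := by ring
      simp [Function.comp, h1, Real.norm_eq_abs, abs_of_pos hs, abs_of_nonneg hs.le]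
    refine aux_nonneg heA' ?_
    filter_upwards [hfA.eventually hineq] with s hs
    have h1 : τ + s - τ = s := by ring
    simpa [h1] using hs
  refine ⟨hA, ?_⟩
  have hB : ∀ v : E n, 0 ≤ ⟪v, B⟫_ℝ := by
    intro v
    have hfB : Filter.Tendsto (fun s : ℝ => ((τ, z + s • v) : ℝ × E n))
        (nhdsWithin 0 (Set.Ioi 0))
        (nhdsWithin (τ, z) (Set.Icc τ ϑ ×ˢ (Set.univ : Set (E n)))) := by
      rw [tendsto_nhdsWithin_iff]
      constructor
      · have hcont : Continuous (fun s : ℝ => ((τ, z + s • v) : ℝ × E n)) :=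
          continuous_const.prodMk (continuous_const.add (continuous_id.smul continuous_const))
        exact (hcont.tendsto' 0 (τ, z) (by simp)).mono_left nhdsWithin_le_nhds
      · exact Filter.Eventually.of_forall fun s =>
          ⟨⟨le_refl τ, hτ.le⟩, Set.mem_univ _⟩
    have heB := he.comp_tendsto hfB
    have heB' : (fun s : ℝ => e (τ, z + s • v)) =o[nhdsWithin (0:ℝ) (Set.Ioi 0)]
        fun s : ℝ => s := by
      refine heB.trans_isBigO (Asymptotics.IsBigO.of_bound ‖v‖ ?_)
      filter_upwards [self_mem_nhdsWithin] with s hs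
      rw [Set.mem_Ioi] at hs
      have h1 : z + s • v - z = s • v := by abel
      simp only [Function.comp, h1, sub_self, abs_zero, zero_add, norm_smul,
        Real.norm_eq_abs, abs_of_pos hs]
      rw [mul_comm, abs_of_nonneg (by positivity : (0:ℝ) ≤ ‖v‖ * s)]
    refine aux_nonneg heB' ?_
    filter_upwards [hfB.eventually hineq] with s hs
    have h1 : z + s • v - z = s • v := by abel
    rw [h1, sub_self, zero_mul, zero_add, real_inner_smul_left] at hs
    simpa using hs
  have h1 := hB (-B)
  rw [inner_neg_left] at h1
  have h2 : ⟪B, B⟫_ℝ = 0 := le_antisymm (by linarith) real_inner_self_nonneg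
  exact inner_self_eq_zero.mp h2

/-- The central lemma: at a point of `𝔾_*`, from ci-differentiability of `φ` and the
one-sided test inequality (with sign `ε = ±1`), the gradient of the test function
must equal the ci-gradient of `φ` and the time derivatives compare. -/
lemma visc_key {n I : ℕ} {h : ℝ} (hh : 0 < h)
    {φ : ℝ → E n → (ℝ → E n) → ℝ} {τ : ℝ} {z : E n} {w : ℝ → E n}
    (hG : InGstar I h τ w) {a : ℝ} {p : E n}
    (hci : HasCiDeriv I h φ τ z w a p)
    {ψ : ℝ → E n → ℝ} (hψ : ContDiff ℝ 1 (Function.uncurry ψ))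
    {δ : ℝ} (hδ : 0 < δ) {κ : ℝ → E n} (hκ : InLambda0 I h τ z w κ)
    (ε : ℝ) (hε : ε = 1 ∨ ε = -1)
    (htest : ∀ (t : ℝ) (x : E n), (t, x) ∈ OPlus δ τ z →
        0 ≤ ε * ((φ t x (shift κ t) - ψ t x) - (φ τ z w - ψ τ z))) :
    gradient (ψ τ) z = p ∧ 0 ≤ ε * (a - deriv (fun r => ψ r z) τ) := by
  obtain ⟨⟨i, hiI, hτmem⟩, hw⟩ := hG
  have hτϑ : τ < (I:ℝ) * h := by
    refine lt_of_lt_of_le hτmem.2 ?_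
    have h1 : ((i:ℝ) + 1) ≤ (I:ℝ) := by exact_mod_cast hiI
    exact mul_le_mul_of_nonneg_right h1 hh.le
  have hF := hci κ hκ.1
  have hψdiff : DifferentiableAt ℝ (Function.uncurry ψ) (τ, z) :=
    hψ.differentiable one_ne_zero (τ, z)
  have hψd : HasFDerivAt (Function.uncurry ψ)
      (fderiv ℝ (Function.uncurry ψ) (τ, z)) (τ, z) := hψdiff.hasFDerivAt
  set L := fderiv ℝ (Function.uncurry ψ) (τ, z) with hLdef
  -- time derivative of ψ
  have hderivτ : HasDerivAt (fun r => ψ r z) (L ((1:ℝ), (0:E n))) τ := by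
    have h1 : HasDerivAt (fun r : ℝ => ((r, z) : ℝ × E n)) ((1:ℝ), (0:E n)) τ :=
      HasDerivAt.prodMk (hasDerivAt_id τ) (hasDerivAt_const τ z)
    exact hψd.comp_hasDerivAt τ h1
  set a' := L ((1:ℝ), (0:E n)) with ha'def
  have ha' : deriv (fun r => ψ r z) τ = a' := hderivτ.deriv
  -- gradient of ψ τ
  set M := (0 : E n →L[ℝ] ℝ).prod (ContinuousLinearMap.id ℝ (E n)) with hMdef
  have hψτd : HasFDerivAt (ψ τ) (L.comp M) z := by
    have h1 : HasFDerivAt (fun x : E n => ((τ, x) : ℝ × E n)) M z :=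
      HasFDerivAt.prodMk (hasFDerivAt_const τ z) (hasFDerivAt_id z)
    exact hψd.comp z h1
  set p' := gradient (ψ τ) z with hp'def
  have hpv : ∀ v : E n, ⟪v, p'⟫_ℝ = L ((0:ℝ), v) := by
    intro v
    rw [hp'def, hψτd.hasGradientAt.gradient, real_inner_comm,
      InnerProductSpace.toDual_symm_apply]
    rfl
  -- the little-o expansion of ψ
  have hLdecomp : ∀ q : ℝ × E n,
      L (q - ((τ, z) : ℝ × E n)) = (q.1 - τ) * a' + ⟪q.2 - z, p'⟫_ℝ := by
    intro q
    have h1 : q - ((τ, z) : ℝ × E n) =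
        (q.1 - τ) • ((1:ℝ), (0:E n)) + ((0:ℝ), q.2 - z) := by
      ext <;> simp
    rw [h1, map_add, ContinuousLinearMap.map_smul, hpv, smul_eq_mul, ha'def]
  have hGlittle : (fun q : ℝ × E n =>
      ψ q.1 q.2 - ψ τ z - (q.1 - τ) * a' - ⟪q.2 - z, p'⟫_ℝ)
      =o[nhdsWithin ((τ, z) : ℝ × E n)
        (Set.Icc τ ((I:ℝ) * h) ×ˢ (Set.univ : Set (E n)))]
      fun q => |q.1 - τ| + ‖q.2 - z‖ := by
    have h0 := hψd.isLittleO
    have h1 : (fun q : ℝ × E n => Function.uncurry ψ q -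
        Function.uncurry ψ (τ, z) - L (q - (τ, z))) =
        fun q : ℝ × E n =>
          ψ q.1 q.2 - ψ τ z - (q.1 - τ) * a' - ⟪q.2 - z, p'⟫_ℝ := by
      funext q
      rw [hLdecomp q]
      show ψ q.1 q.2 - ψ τ z - ((q.1 - τ) * a' + ⟪q.2 - z, p'⟫_ℝ) = _
      ring
    rw [h1] at h0
    have h2 : (fun q : ℝ × E n => q - ((τ, z) : ℝ × E n))
        =O[nhds ((τ, z) : ℝ × E n)] fun q => |q.1 - τ| + ‖q.2 - z‖ := by
      refine Asymptotics.IsBigO.of_bound 1 (Filter.Eventually.of_forall fun q => ?_)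
      have h3 : ‖q - ((τ, z) : ℝ × E n)‖ = max |q.1 - τ| ‖q.2 - z‖ := by
        rw [Prod.norm_def]
        rfl
      rw [h3, one_mul, Real.norm_eq_abs,
        abs_of_nonneg (by positivity : (0:ℝ) ≤ |q.1 - τ| + ‖q.2 - z‖)]
      exact max_le (le_add_of_nonneg_right (norm_nonneg _))
        (le_add_of_nonneg_left (abs_nonneg _))
    exact ((h0.trans_isBigO h2).mono nhdsWithin_le_nhds)
  -- combine
  have hsub := (hF.sub hGlittle).const_mul_left ε
  have hO : ∀ᶠ q : ℝ × E n in nhdsWithin (τ, z)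
      (Set.Icc τ ((I:ℝ) * h) ×ˢ (Set.univ : Set (E n))), q ∈ OPlus δ τ z := by
    rw [eventually_nhdsWithin_iff]
    filter_upwards [Metric.ball_mem_nhds ((τ, z) : ℝ × E n) hδ] with q hq hqs
    have hd : dist q ((τ, z) : ℝ × E n) < δ := Metric.mem_ball.mp hq
    rw [Prod.dist_eq] at hd
    have hd1 : |q.1 - τ| < δ := by
      rw [← Real.dist_eq]
      exact lt_of_le_of_lt (le_max_left _ _) hd
    have hd2 : ‖q.2 - z‖ < δ := by
      rw [← dist_eq_norm]
      exact lt_of_le_of_lt (le_max_right _ _) hd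
    exact ⟨⟨hqs.1.1, by cases' abs_lt.mp hd1 with h1 h2; linarith⟩, hd2.le⟩
  have hineq : ∀ᶠ q : ℝ × E n in nhdsWithin (τ, z)
      (Set.Icc τ ((I:ℝ) * h) ×ˢ (Set.univ : Set (E n))),
      0 ≤ (q.1 - τ) * (ε * (a - a')) + ⟪q.2 - z, ε • (p - p')⟫_ℝ +
        ε * ((φ q.1 q.2 (shift κ q.1) - φ τ z w - (q.1 - τ) * a - ⟪q.2 - z, p⟫_ℝ) -
          (ψ q.1 q.2 - ψ τ z - (q.1 - τ) * a' - ⟪q.2 - z, p'⟫_ℝ)) := by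
    filter_upwards [hO] with q hq
    have h1 := htest q.1 q.2 hq
    have h2 : (q.1 - τ) * (ε * (a - a')) + ⟪q.2 - z, ε • (p - p')⟫_ℝ +
        ε * ((φ q.1 q.2 (shift κ q.1) - φ τ z w - (q.1 - τ) * a - ⟪q.2 - z, p⟫_ℝ) -
          (ψ q.1 q.2 - ψ τ z - (q.1 - τ) * a' - ⟪q.2 - z, p'⟫_ℝ)) =
        ε * ((φ q.1 q.2 (shift κ q.1) - ψ q.1 q.2) - (φ τ z w - ψ τ z)) := by
      rw [real_inner_smul_right, inner_sub_right]
      ring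
    rw [h2]
    exact h1
  obtain ⟨hA, hB⟩ := key_nonneg hτϑ z (ε * (a - a')) (ε • (p - p')) hsub hineq
  have hε0 : ε ≠ 0 := by rcases hε with h1 | h1 <;> rw [h1] <;> norm_num
  have hp : p' = p := by
    rcases smul_eq_zero.mp hB with h1 | h1
    · exact absurd h1 hε0
    · exact (sub_eq_zero.mp h1).symm
  constructor
  · exact hp
  · rw [ha']; exact hA

/-- Theorem `teo:classical_and_viscosity_solutions` (b): a ci-differentiable functional
satisfying the Hamilton–Jacobi equation on `𝔾_*`, conditions (φ₁), (φ₂), and the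
terminal condition is the viscosity solution. -/
theorem classical_solution_is_viscosity_solution
    {n : ℕ} (hn : 1 ≤ n) (I : ℕ) (hI : 1 ≤ I) (h : ℝ) (hh : 0 < h)
    (g : ℝ → E n → E n) (H : ℝ → E n → E n → E n → ℝ) (cH : ℝ)
    (σf : E n → (ℝ → E n) → ℝ)
    (hg : CondG I h g) (hH1 : CondH1 I h H) (hH2 : CondH2 I h cH H)
    (hH3 : CondH3 I h H) (hσ : CondSigma h σf)
    (φ : ℝ → E n → (ℝ → E n) → ℝ)
    (hφ1 : Phi1 I h φ) (hφ2 : Phi2 I h φ) (hterm : TermCond I h σf φ)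
    (hHJ : ∀ (τ : ℝ) (z : E n) (w : ℝ → E n), InGstar I h τ w →
      ∃ (a : ℝ) (p : E n), HasCiDeriv I h φ τ z w a p ∧
        a + ⟪ciDg I h g τ w, p⟫_ℝ + H τ z (w (-h)) p = 0) :
    IsViscositySol I h g H σf φ := by
  refine ⟨hφ1, hφ2, hterm, ?_, ?_⟩
  · intro τ z w hGst ψ hψ δ hδ κ hκ htest
    obtain ⟨a, p, hci, hHJeq⟩ := hHJ τ z w hGst
    obtain ⟨hgrad, hA⟩ := visc_key hh hGst hci hψ hδ hκ 1 (Or.inl rfl)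
      (fun t x hx => by have := htest t x hx; linarith)
    rw [hgrad]
    have h1 : deriv (fun r => ψ r z) τ ≤ a := by linarith
    linarith [hHJeq]
  · intro τ z w hGst ψ hψ δ hδ κ hκ htest
    obtain ⟨a, p, hci, hHJeq⟩ := hHJ τ z w hGst
    obtain ⟨hgrad, hA⟩ := visc_key hh hGst hci hψ hδ hκ (-1) (Or.inr rfl)
      (fun t x hx => by have := htest t x hx; linarith)
    rw [hgrad]
    have h1 : a ≤ deriv (fun r => ψ r z) τ := by linarith
    linarith [hHJeq]
end
end

section
/- For every α > 0 there exist constants α_X = α_X(α) > 0, α_X^* = α_X^*(α) > 0, and λ_X^* = λ_X^*(α) > 0 such that, for each τ ∈ [0,ϑ] and (z,w) ∈ P(α), every function x ∈ X^1(τ,z,w) and the corresponding function y(t) = x(t) − g(t,x(t−h)), t ∈ [τ,ϑ], satisfy: (x(t),x_t) ∈ P(α_X), ‖y(t)‖ ≤ α_X^*, and ‖y(t) − y(t')‖ ≤ λ_X^* |t − t'| for all t,t' ∈ [τ,ϑ]. -/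
open Filter Set MeasureTheory Asymptotics
open scoped InnerProductSpace Topology

noncomputable section

/-- sequence of slopes converges for HasDerivAt -/
lemma seq_slope {n : ℕ} {f : ℝ → E n} {u : ℝ} {l₀ : E n} (hf : HasDerivAt f l₀ u) :
    Tendsto (fun m : ℕ => ((m : ℝ) + 1) • (f (u + ((m : ℝ) + 1)⁻¹) - f u)) atTop (𝓝 l₀) := by
  have hslope := hasDerivAt_iff_tendsto_slope.1 hf
  have hseq : Tendsto (fun m : ℕ => u + ((m : ℝ) + 1)⁻¹) atTop (𝓝[≠] u) := by
    rw [tendsto_nhdsWithin_iff]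
    constructor
    · have h0 : Tendsto (fun m : ℕ => ((m : ℝ) + 1)⁻¹) atTop (𝓝 0) := by
        simpa [one_div] using tendsto_one_div_add_atTop_nhds_zero_nat (𝕜 := ℝ)
      simpa using tendsto_const_nhds.add h0
    · filter_upwards with m
      have : (0:ℝ) < ((m : ℝ) + 1)⁻¹ := by positivity
      simp only [mem_compl_iff, mem_singleton_iff]
      intro hc
      nlinarith [this, hc]
  have := hslope.comp hseq
  apply this.congr
  intro m
  have hne : ((m : ℝ) + 1) ≠ 0 := by positivity
  simp only [Function.comp, slope_def_module]
  rw [add_sub_cancel_left, inv_inv]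

/-- clamp is 1-Lipschitz -/
lemma clamp_lip (a b : ℝ) : LipschitzWith 1 (fun u : ℝ => max a (min b u)) := by
  apply LipschitzWith.of_dist_le_mul
  intro x y
  simp only [Real.dist_eq, NNReal.coe_one, one_mul]
  calc |max a (min b x) - max a (min b y)| ≤ |min b x - min b y| := by
        simpa [max_comm] using abs_max_sub_max_le_abs (min b x) (min b y) a
    _ ≤ max |b - b| |x - y| := abs_min_sub_min_le_max b x b y
    _ ≤ |x - y| := by simp

lemma clamp_mem {a b : ℝ} (hab : a ≤ b) (u : ℝ) : max a (min b u) ∈ Icc a b :=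
  ⟨le_max_left _ _, max_le hab (min_le_left _ _)⟩

lemma clamp_eq {a b : ℝ} {u : ℝ} (hu : u ∈ Icc a b) : max a (min b u) = u := by
  rw [min_eq_right hu.2, max_eq_right hu.1]

/-- Key lemma: a.e. derivative bound on an interval plus Lipschitz gives a Lipschitz bound. -/
lemma lip_of_ae_deriv_bound {n : ℕ} {f : ℝ → E n} {a b : ℝ} {K : NNReal} {L : ℝ}
    (hab : a ≤ b) (hL : 0 ≤ L) (hf : LipschitzOnWith K f (Icc a b))
    (hd : ∀ᵐ u ∂(volume : Measure ℝ), u ∈ Ioo a b → ∃ l : E n, HasDerivAt f l u ∧ ‖l‖ ≤ L) :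
    ∀ s ∈ Icc a b, ∀ t ∈ Icc a b, s ≤ t → ‖f t - f s‖ ≤ L * (t - s) := by
  classical
  set c : ℝ → ℝ := fun u => max a (min b u) with hc
  set F : ℝ → E n := fun u => f (c u) with hF
  have hFlip : LipschitzWith K F := by
    apply LipschitzWith.of_dist_le_mul
    intro x y
    calc dist (F x) (F y) ≤ K * dist (c x) (c y) :=
          hf.dist_le_mul _ (clamp_mem hab x) _ (clamp_mem hab y)
      _ ≤ K * dist x y := by
          have h1 : dist (c x) (c y) ≤ dist x y := by
            simpa using (clamp_lip a b).dist_le_mul x y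
          exact mul_le_mul_of_nonneg_left h1 (by positivity)
  have hFcont : Continuous F := hFlip.continuous
  have hFeq : ∀ u ∈ Icc a b, F u = f u := by
    intro u hu
    show f (max a (min b u)) = f u
    rw [clamp_eq hu]
  -- a.e. derivative of F
  have hdF : ∀ᵐ u ∂(volume : Measure ℝ), u ∈ Ioo a b →
      ∃ l : E n, HasDerivAt F l u ∧ ‖l‖ ≤ L := by
    filter_upwards [hd] with u hu huab
    obtain ⟨l, hl, hlL⟩ := hu huab
    refine ⟨l, ?_, hlL⟩
    apply hl.congr_of_eventuallyEq
    filter_upwards [Ioo_mem_nhds huab.1 huab.2] with v hv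
    exact hFeq v (Ioo_subset_Icc_self hv)
  -- the a.e. derivative as a function
  set l : ℝ → E n := fun u =>
    if hu : ∃ l : E n, HasDerivAt F l u ∧ ‖l‖ ≤ L then hu.choose else 0 with hldef
  have hlbound : ∀ u, ‖l u‖ ≤ L := by
    intro u
    rw [hldef]
    by_cases hu : ∃ l : E n, HasDerivAt F l u ∧ ‖l‖ ≤ L
    · simp only [dif_pos hu]; exact hu.choose_spec.2
    · simp [dif_neg hu, hL]
  have hlderiv : ∀ᵐ u ∂(volume : Measure ℝ), u ∈ Ioo a b → HasDerivAt F (l u) u := by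
    filter_upwards [hdF] with u hu huab
    have h' := hu huab
    rw [hldef]
    simp only [dif_pos h']
    exact h'.choose_spec.1
  intro s hs t ht hst
  rcases eq_or_lt_of_le hst with rfl | hst'
  · simp [hL]
  -- main computation on [s,t]
  have hIoc : Ioc s t ⊆ Icc a b := fun u hu => ⟨hs.1.trans hu.1.le, hu.2.trans ht.2⟩
  have hIocIoo : (volume : Measure ℝ) (Ioc s t \ Ioo a b) = 0 := by
    have hsub : Ioc s t \ Ioo a b ⊆ {a, b} := by
      intro u hu
      have h1 := hIoc hu.1
      have h2 := hu.2
      simp only [mem_Ioo, not_and_or, not_lt] at h2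
      simp only [mem_insert_iff, mem_singleton_iff]
      rcases h2 with h | h
      · left; linarith [h1.1]
      · right; linarith [h1.2]
    exact measure_mono_null hsub
      (((Set.countable_singleton b).insert a).measure_zero _)
  have hres : ∀ᵐ u ∂(volume.restrict (Ioc s t)), u ∈ Ioo a b := by
    refine (ae_restrict_iff' measurableSet_Ioc).2 ?_
    rw [ae_iff]
    apply measure_mono_null _ hIocIoo
    intro u hu
    simp only [mem_setOf_eq, not_forall] at hu
    exact ⟨hu.1, hu.2⟩
  -- dominated convergence
  set Fn : ℕ → ℝ → E n := fun m u => ((m : ℝ) + 1) • (F (u + ((m : ℝ) + 1)⁻¹) - F u) with hFn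
  have hcontn : ∀ m : ℕ, Continuous (Fn m) := fun m =>
    ((hFcont.comp (continuous_id.add (continuous_const : Continuous fun _ : ℝ => ((m : ℝ) + 1)⁻¹))).sub hFcont).const_smul ((m : ℝ) + 1)
  have hkey1 : Tendsto (fun m => ∫ u in Ioc s t, Fn m u) atTop (𝓝 (∫ u in Ioc s t, l u)) := by
    apply tendsto_integral_of_dominated_convergence (fun _ => (K : ℝ))
    · exact fun m => (hcontn m).aestronglyMeasurable.restrict
    · exact integrableOn_const measure_Ioc_lt_top.ne
    · intro m
      filter_upwards with u
      have hm : (0:ℝ) < (m : ℝ) + 1 := by positivity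
      have hds : dist (F (u + ((m : ℝ) + 1)⁻¹)) (F u) ≤ K * ((m : ℝ) + 1)⁻¹ := by
        have := hFlip.dist_le_mul (u + ((m : ℝ) + 1)⁻¹) u
        rwa [Real.dist_eq, add_sub_cancel_left, abs_of_pos (by positivity)] at this
      rw [dist_eq_norm] at hds
      show ‖((m : ℝ) + 1) • (F (u + ((m : ℝ) + 1)⁻¹) - F u)‖ ≤ (K : ℝ)
      rw [norm_smul, Real.norm_eq_abs, abs_of_pos hm]
      calc ((m:ℝ)+1) * ‖F (u + ((m : ℝ) + 1)⁻¹) - F u‖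
          ≤ ((m:ℝ)+1) * ((K:ℝ) * ((m : ℝ) + 1)⁻¹) :=
            mul_le_mul_of_nonneg_left hds hm.le
        _ = (K:ℝ) := by field_simp
    · filter_upwards [ae_restrict_of_ae hlderiv, hres] with u hu huab
      exact seq_slope (hu huab)
  -- compute the integrals
  have hint : ∀ (p q : ℝ), IntervalIntegrable F volume p q := fun p q =>
    hFcont.intervalIntegrable p q
  have hkey2 : ∀ m : ℕ, ∫ u in Ioc s t, Fn m u =
      ((m : ℝ) + 1) • ((∫ u in t..(t + ((m : ℝ) + 1)⁻¹), F u) -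
        ∫ u in s..(s + ((m : ℝ) + 1)⁻¹), F u) := by
    intro m
    set r : ℝ := ((m : ℝ) + 1)⁻¹ with hr
    have hint1 : IntervalIntegrable (fun u => F (u + r)) volume s t :=
      (hFcont.comp (continuous_id.add continuous_const)).intervalIntegrable s t
    rw [← intervalIntegral.integral_of_le hst]
    calc (∫ u in s..t, Fn m u)
        = ∫ u in s..t, ((m : ℝ) + 1) • (F (u + r) - F u) := rfl
      _ = ((m : ℝ) + 1) • ∫ u in s..t, (F (u + r) - F u) := intervalIntegral.integral_smul _ _
      _ = ((m : ℝ) + 1) • ((∫ u in s..t, F (u + r)) - ∫ u in s..t, F u) := by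
          rw [intervalIntegral.integral_sub hint1 (hint s t)]
      _ = ((m : ℝ) + 1) • ((∫ u in t..(t + r), F u) - ∫ u in s..(s + r), F u) := by
          congr 1
          rw [intervalIntegral.integral_comp_add_right]
          have hA : (∫ u in s..(s+r), F u) + (∫ u in (s+r)..(t+r), F u)
              = ∫ u in s..(t+r), F u :=
            intervalIntegral.integral_add_adjacent_intervals (hint _ _) (hint _ _)
          have hB : (∫ u in s..t, F u) + (∫ u in t..(t+r), F u) = ∫ u in s..(t+r), F u :=
            intervalIntegral.integral_add_adjacent_intervals (hint _ _) (hint _ _)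
          have hC : (∫ u in (s+r)..(t+r), F u)
              = (∫ u in s..(t+r), F u) - ∫ u in s..(s+r), F u := by
            rw [← hA]; abel
          rw [hC, ← hB]; abel
  -- convergence of boundary terms
  have hbd : ∀ v : ℝ, Tendsto (fun m : ℕ => ((m : ℝ) + 1) • ∫ u in v..(v + ((m : ℝ) + 1)⁻¹), F u)
      atTop (𝓝 (F v)) := by
    intro v
    have hG : HasDerivAt (fun p => ∫ u in v..p, F u) (F v) v :=
      intervalIntegral.integral_hasDerivAt_right (hint v v)
        (hFcont.stronglyMeasurableAtFilter _ _) hFcont.continuousAt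
    apply (seq_slope hG).congr
    intro m
    simp [intervalIntegral.integral_same]
  have hkey3 : Tendsto (fun m => ∫ u in Ioc s t, Fn m u) atTop (𝓝 (F t - F s)) := by
    apply ((hbd t).sub (hbd s)).congr
    intro m
    rw [hkey2 m, smul_sub]
  have heq : F t - F s = ∫ u in Ioc s t, l u := tendsto_nhds_unique hkey3 hkey1
  rw [← hFeq t ht, ← hFeq s hs, heq, ← intervalIntegral.integral_of_le hst]
  have := intervalIntegral.norm_integral_le_of_norm_le_const (C := L) (f := l) (a := s) (b := t)
    (fun u _ => hlbound u)
  rwa [abs_of_nonneg (by linarith)] at this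

lemma xi_mono {k : ℕ} {ξ : ℕ → ℝ} (hm : ∀ i < k, ξ i < ξ (i + 1)) :
    ∀ i j, i ≤ j → j ≤ k → ξ i ≤ ξ j := by
  intro i j hij hjk
  induction j with
  | zero => simp_all
  | succ m ih =>
    rcases Nat.lt_succ_iff_lt_or_eq.mp (Nat.lt_succ_of_le hij) with hlt | rfl
    · exact (ih (Nat.lt_succ_iff.mp hlt) (by omega)).trans (hm m (by omega)).le
    · exact le_refl _

lemma find_piece {k : ℕ} {ξ : ℕ → ℝ} (hm : ∀ i < k, ξ i < ξ (i + 1)) :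
    ∀ s, ξ 0 ≤ s → s < ξ k → ∃ i < k, ξ i ≤ s ∧ s < ξ (i + 1) := by
  induction k with
  | zero => intro s h1 h2; exact absurd (h1.trans_lt h2) (lt_irrefl _)
  | succ m ih =>
    intro s h1 h2
    by_cases hs : s < ξ m
    · obtain ⟨i, hi, h⟩ := ih (fun i hi => hm i (by omega)) s h1 hs
      exact ⟨i, by omega, h⟩
    · exact ⟨m, by omega, le_of_not_gt hs, h2⟩

/-- A piecewise Lipschitz function is bounded on `[a,b)`. -/
lemma plip_bound {n : ℕ} {v : ℝ → E n} {a b : ℝ} (H : PiecewiseLipOn v a b) :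
    ∃ C, ∀ s ∈ Ico a b, ‖v s‖ ≤ C := by
  classical
  obtain ⟨k, ξ, hk, h0, hkb, hm, hlip⟩ := H
  have hlip' : ∀ i, ∃ K : NNReal, i < k → LipschitzOnWith K v (Ico (ξ i) (ξ (i+1))) := by
    intro i
    by_cases hi : i < k
    · obtain ⟨K, hK⟩ := hlip i hi; exact ⟨K, fun _ => hK⟩
    · exact ⟨0, fun h => absurd h hi⟩
  choose KK hKK using hlip'
  refine ⟨(Finset.range k).sup' (by simp [Finset.nonempty_range_iff]; omega) (fun i => ‖v (ξ i)‖ + (KK i) * (b - a)), ?_⟩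
  intro s hs
  obtain ⟨i, hik, his, hsi⟩ := find_piece hm s (h0 ▸ hs.1) (hkb ▸ hs.2)
  have hKi := hKK i hik
  have hsm : s ∈ Ico (ξ i) (ξ (i+1)) := ⟨his, hsi⟩
  have hxm : ξ i ∈ Ico (ξ i) (ξ (i+1)) := ⟨le_refl _, hm i hik⟩
  have hd := hKi.dist_le_mul s hsm (ξ i) hxm
  have hab : dist s (ξ i) ≤ b - a := by
    rw [Real.dist_eq, abs_of_nonneg (by linarith)]
    have h1 : a ≤ ξ i := h0 ▸ xi_mono hm 0 i (Nat.zero_le _) (by omega)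
    have h2 : s < b := hs.2
    linarith
  have h3 := hd.trans (mul_le_mul_of_nonneg_left hab (KK i).coe_nonneg)
  have h4 : ‖v s‖ - ‖v (ξ i)‖ ≤ ‖v s - v (ξ i)‖ := norm_sub_norm_le _ _
  rw [← dist_eq_norm] at h4
  have : ‖v s‖ ≤ ‖v (ξ i)‖ + (KK i) * (b - a) := by linarith
  exact this.trans (Finset.le_sup' (fun i => ‖v (ξ i)‖ + (KK i : ℝ) * (b - a)) (Finset.mem_range.mpr hik))

/-- Restriction of a piecewise Lipschitz function to a subinterval. -/
lemma PiecewiseLipOn.mono' {n : ℕ} {x : ℝ → E n} {a b c d : ℝ}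
    (H : PiecewiseLipOn x a b) (hac : a ≤ c) (hcd : c < d) (hdb : d ≤ b) :
    PiecewiseLipOn x c d := by
  classical
  obtain ⟨k, ξ, hk, h0, hkb, hm, hlip⟩ := H
  -- largest index with ξ i ≤ c
  set i₀ : ℕ := Nat.findGreatest (fun i => ξ i ≤ c) k with hi₀def
  have hi₀le : ξ i₀ ≤ c := Nat.findGreatest_spec (P := fun i => ξ i ≤ c) (Nat.zero_le k) (show ξ 0 ≤ c by rw [h0]; exact hac)
  have hi₀k : i₀ ≤ k := Nat.findGreatest_le k
  have hi₀gr : ∀ m, i₀ < m → m ≤ k → c < ξ m := by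
    intro m h1 h2
    exact lt_of_not_ge (Nat.findGreatest_is_greatest h1 h2)
  have hi₀lt : i₀ < k := by
    rcases eq_or_lt_of_le hi₀k with h | h
    · exfalso; rw [h] at hi₀le; rw [hkb] at hi₀le; linarith
    · exact h
  -- smallest index with d ≤ ξ i
  have hex : ∃ i, d ≤ ξ i := ⟨k, by rw [hkb]; exact hdb⟩
  set j₀ : ℕ := Nat.find hex with hj₀def
  have hj₀ge : d ≤ ξ j₀ := Nat.find_spec hex
  have hj₀min : ∀ m, m < j₀ → ξ m < d := fun m hm' =>
    lt_of_not_ge (Nat.find_min hex hm')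
  have hj₀k : j₀ ≤ k := Nat.find_min' hex (by rw [hkb]; exact hdb)
  have hij : i₀ < j₀ := by
    by_contra hcon
    push_neg at hcon
    have := xi_mono hm j₀ i₀ hcon hi₀k
    linarith
  set k' : ℕ := j₀ - i₀ with hk'def
  have hk'pos : 0 < k' := by omega
  set η : ℕ → ℝ := fun j => if j = 0 then c else if k' ≤ j then d else ξ (i₀ + j) with hηdef
  refine ⟨k', η, hk'pos, by simp [hηdef], by simp [hηdef]; omega, ?_, ?_⟩
  · -- strict monotonicity
    intro j hj
    rcases Nat.eq_zero_or_pos j with rfl | hjpos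
    · have hη0 : η 0 = c := by simp [hηdef]
      by_cases h1 : k' ≤ 1
      · have hη1 : η 1 = d := by simp only [hηdef]; rw [if_neg one_ne_zero, if_pos h1]
        rw [hη0, hη1]; exact hcd
      · have hη1 : η 1 = ξ (i₀ + 1) := by
          simp only [hηdef]; rw [if_neg one_ne_zero, if_neg h1]
        rw [hη0, hη1]; exact hi₀gr (i₀ + 1) (by omega) (by omega)
    · have hηj : η j = ξ (i₀ + j) := by
        simp only [hηdef]
        rw [if_neg (by omega), if_neg (by omega)]
      by_cases h1 : j + 1 = k'
      · have : η (j+1) = d := by simp only [hηdef]; rw [if_neg (by omega), if_pos (by omega)]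
        rw [hηj, this]
        exact hj₀min (i₀ + j) (by omega)
      · have : η (j+1) = ξ (i₀ + j + 1) := by
          simp only [hηdef]; rw [if_neg (by omega), if_neg (by omega), ← Nat.add_assoc]
        rw [hηj, this]
        exact hm (i₀ + j) (by omega)
  · -- Lipschitz on pieces
    intro j hj
    have hik : i₀ + j < k := by omega
    obtain ⟨K, hK⟩ := hlip (i₀ + j) hik
    refine ⟨K, hK.mono ?_⟩
    intro u hu
    constructor
    · -- lower bound : ξ (i₀ + j) ≤ u
      rcases Nat.eq_zero_or_pos j with rfl | hjpos
      · calc ξ (i₀ + 0) ≤ c := by simpa using hi₀le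
          _ ≤ u := by simpa [hηdef] using hu.1
      · have : η j = ξ (i₀ + j) := by
          simp only [hηdef]; rw [if_neg (by omega), if_neg (by omega)]
        rw [← this]; exact hu.1
    · -- upper bound : u < ξ (i₀ + j + 1)
      by_cases h1 : j + 1 = k'
      · have hη : η (j+1) = d := by
          simp only [hηdef]; rw [if_neg (by omega), if_pos (by omega)]
        have : d ≤ ξ (i₀ + j + 1) := by
          have : i₀ + j + 1 = j₀ := by omega
          rw [this]; exact hj₀ge
        calc u < η (j + 1) := hu.2
          _ = d := hη
          _ ≤ _ := this
      · have : η (j+1) = ξ (i₀ + j + 1) := by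
          simp only [hηdef]; rw [if_neg (by omega), if_neg (by omega), ← Nat.add_assoc]
        rw [← this]; exact hu.2

/-- translation of a piecewise Lipschitz function -/
lemma PiecewiseLipOn.shift' {n : ℕ} {x : ℝ → E n} {t h : ℝ}
    (H : PiecewiseLipOn x (t - h) t) : PiecewiseLipOn (shift x t) (-h) 0 := by
  obtain ⟨k, ξ, hk, h0, hkb, hm, hlip⟩ := H
  refine ⟨k, fun i => ξ i - t, hk, show ξ 0 - t = -h by rw [h0]; ring,
    show ξ k - t = 0 by rw [hkb]; ring, fun i hi => show ξ i - t < ξ (i+1) - t by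
      have := hm i hi; linarith, ?_⟩
  intro i hi
  obtain ⟨K, hK⟩ := hlip i hi
  refine ⟨K * 1, ?_⟩
  have htr : LipschitzOnWith 1 (fun u : ℝ => t + u) (Ico (ξ i - t) (ξ (i+1) - t)) := by
    intro p hp q hq
    simp [edist_dist, dist_add_left]
  apply hK.comp htr
  intro u hu
  refine ⟨show ξ i ≤ t + u from by linarith [hu.1], show t + u < ξ (i+1) from by linarith [hu.2]⟩


/-- Supremum of `‖g‖` on `[0,ϑ] × closedBall 0 B`. -/
def MgB {n : ℕ} (g : ℝ → E n → E n) (ϑ B : ℝ) : ℝ :=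
  sSup ((fun p : ℝ × E n => ‖g p.1 p.2‖) '' (Icc (0:ℝ) ϑ ×ˢ Metric.closedBall 0 B))

lemma MgB_bound {n : ℕ} {I : ℕ} {h : ℝ} {g : ℝ → E n → E n} (hg : CondG I h g)
    {B : ℝ} (hB : 0 ≤ B) :
    ∀ t ∈ Icc (0:ℝ) ((I:ℝ)*h), ∀ v : E n, ‖v‖ ≤ B → ‖g t v‖ ≤ MgB g ((I:ℝ)*h) B := by
  intro t ht v hv
  have hcomp : IsCompact (Icc (0:ℝ) ((I:ℝ)*h) ×ˢ Metric.closedBall (0 : E n) B) :=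
    isCompact_Icc.prod (isCompact_closedBall 0 B)
  have hcont : ContinuousOn (fun p : ℝ × E n => ‖g p.1 p.2‖)
      (Icc (0:ℝ) ((I:ℝ)*h) ×ˢ Metric.closedBall (0 : E n) B) := by
    have h1 : ContinuousOn (Function.uncurry g)
        (Icc (0:ℝ) ((I:ℝ)*h) ×ˢ (univ : Set (E n))) := hg.continuousOn
    exact (h1.mono (prod_mono_right (subset_univ _))).norm
  have hbdd : BddAbove ((fun p : ℝ × E n => ‖g p.1 p.2‖) ''
      (Icc (0:ℝ) ((I:ℝ)*h) ×ˢ Metric.closedBall (0 : E n) B)) :=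
    (hcomp.image_of_continuousOn hcont).bddAbove
  exact le_csSup hbdd ⟨(t, v), ⟨ht, by simpa [Metric.mem_closedBall] using hv⟩, rfl⟩

/-- The recursive bound sequence. -/
def BSeq (M : ℝ → ℝ) (cH ℓ α : ℝ) : ℕ → ℝ := fun k =>
  Nat.rec α (fun _ Bp => max Bp (2*(Bp + M Bp + ℓ*(cH*(1+M Bp+Bp)+1)) + M Bp)) k

set_option maxHeartbeats 2000000 in
/-- Lemma `lem:alpha_x_lambda_x`: uniform bounds and a uniform Lipschitz constant for
trajectories of the differential inclusion and for `y(t) = x(t) - g(t,x(t-h))`. -/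
theorem bounds_for_inclusion_trajectories
    {n : ℕ} (hn : 1 ≤ n) (I : ℕ) (hI : 1 ≤ I) (h : ℝ) (hh : 0 < h)
    (g : ℝ → E n → E n) (hg : CondG I h g) (cH : ℝ) (hcH : 0 < cH) :
    ∀ α > 0, ∃ αX > 0, ∃ αXs > 0, ∃ lamXs > 0,
      ∀ τ ∈ Set.Icc (0:ℝ) ((I:ℝ) * h), ∀ (z : E n) (w : ℝ → E n), InP h α z w →
        ∀ x : ℝ → E n, InX I h g cH 1 τ z w x →
          (∀ t ∈ Set.Icc τ ((I:ℝ) * h),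
            InP h αX (x t) (shift x t) ∧ ‖x t - g t (x (t - h))‖ ≤ αXs) ∧
          (∀ t ∈ Set.Icc τ ((I:ℝ) * h), ∀ t' ∈ Set.Icc τ ((I:ℝ) * h),
            ‖(x t - g t (x (t - h))) - (x t' - g t' (x (t' - h)))‖ ≤
              lamXs * |t - t'|) := by
  intro α hα
  have hϑh : h ≤ (I:ℝ) * h := by
    have h1 : (1:ℝ) ≤ (I:ℝ) := by exact_mod_cast hI
    nlinarith
  have hϑ0 : (0:ℝ) ≤ (I:ℝ) * h := by linarith
  set ℓ : ℝ := min h (1/(2*cH)) with hℓdef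
  have hℓpos : 0 < ℓ := lt_min hh (by positivity)
  have hℓh : ℓ ≤ h := min_le_left _ _
  have hℓcH : cH * ℓ ≤ 1/2 := by
    have h1 : ℓ ≤ 1/(2*cH) := min_le_right _ _
    calc cH * ℓ ≤ cH * (1/(2*cH)) := by nlinarith
      _ = 1/2 := by field_simp
  set N : ℕ := ⌈((I:ℝ) * h) / ℓ⌉₊ with hNdef
  have hNℓ : (I:ℝ) * h ≤ (N:ℝ) * ℓ := by
    have h1 : ((I:ℝ) * h) / ℓ ≤ (N:ℝ) := Nat.le_ceil _
    calc (I:ℝ) * h = (((I:ℝ) * h) / ℓ) * ℓ := by field_simp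
      _ ≤ (N:ℝ) * ℓ := mul_le_mul_of_nonneg_right h1 hℓpos.le
  set M : ℝ → ℝ := fun B => MgB g ((I:ℝ)*h) B with hM
  have hMnn : ∀ BB : ℝ, 0 ≤ BB → 0 ≤ M BB := fun BB hBB =>
    (norm_nonneg (g 0 0)).trans (MgB_bound hg hBB 0 ⟨le_refl 0, hϑ0⟩ 0 (by simp [hBB]))
  set B : ℕ → ℝ := BSeq M cH ℓ α with hB
  have hBsucc : ∀ k, B (k+1) =
      max (B k) (2*(B k + M (B k) + ℓ*(cH*(1+M (B k)+B k)+1)) + M (B k)) := fun k => rfl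
  have hBmono : ∀ k, B k ≤ B (k+1) := fun k => by rw [hBsucc]; exact le_max_left _ _
  have hBα : ∀ k, α ≤ B k := by
    intro k
    induction k with
    | zero => exact le_refl α
    | succ m ih => exact ih.trans (hBmono m)
  have hBpos : ∀ k, 0 < B k := fun k => lt_of_lt_of_le hα (hBα k)
  set αX : ℝ := B N with hαX
  set αXs : ℝ := αX + M αX with hαXs
  set lamXs : ℝ := cH * (1 + 2*αX) + 1 with hlamXs
  have hMαX : 0 ≤ M αX := hMnn αX (hBpos N).le
  have hαXpos : 0 < αX := hBpos N
  refine ⟨αX, hαXpos, αXs, by rw [hαXs]; linarith, lamXs, by rw [hlamXs]; positivity, ?_⟩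
  intro τ hτ z w hP x hx
  obtain ⟨⟨hxpl, hxτ, hxw⟩, ⟨K, hKy⟩, hae⟩ := hx
  have hτϑ : τ ≤ (I:ℝ)*h := hτ.2
  have hτ0 : 0 ≤ τ := hτ.1
  -- pointwise history bound
  have hwbd : ∀ ξ ∈ Ico (-h) (0:ℝ), ‖w ξ‖ ≤ α := by
    obtain ⟨C, hC⟩ := plip_bound hP.1
    intro ξ hξ
    have hbdd : BddAbove (Set.range fun p : Ico (-h) (0:ℝ) => ‖w p.1‖) := by
      refine ⟨C, ?_⟩
      rintro _ ⟨p, rfl⟩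
      exact hC p.1 p.2
    exact (le_ciSup hbdd (⟨ξ, hξ⟩ : Ico (-h) (0:ℝ))).trans hP.2.2
  have hhist : ∀ s ∈ Icc (τ - h) τ, ‖x s‖ ≤ α := by
    intro s hs
    rcases eq_or_lt_of_le hs.2 with rfl | hlt
    · rw [hxτ]; exact hP.2.1
    · rw [hxw s ⟨hs.1, hlt⟩]
      exact hwbd _ ⟨by linarith [hs.1], by linarith⟩
  -- the master induction
  have master : ∀ k : ℕ, ∀ s ∈ Icc (τ - h) (min (τ + (k:ℝ) * ℓ) ((I:ℝ)*h)), ‖x s‖ ≤ B k := by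
    intro k
    induction k with
    | zero =>
      intro s hs
      have hmin : min (τ + ((0:ℕ):ℝ) * ℓ) ((I:ℝ)*h) = τ := by
        simp only [Nat.cast_zero, zero_mul, add_zero]
        exact min_eq_left hτϑ
      exact hhist s ⟨hs.1, by rw [hmin] at hs; exact hs.2⟩
    | succ k ih =>
      intro s hs
      by_cases hsk : s ≤ min (τ + (k:ℝ)*ℓ) ((I:ℝ)*h)
      · exact (ih s ⟨hs.1, hsk⟩).trans (hBmono k)
      push_neg at hsk
      have hsϑ : s ≤ (I:ℝ)*h := hs.2.trans (min_le_right _ _)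
      have hu0s : τ + (k:ℝ)*ℓ < s := by
        rcases min_cases (τ + (k:ℝ)*ℓ) ((I:ℝ)*h) with ⟨heq, _⟩ | ⟨heq, hle⟩
        · rw [heq] at hsk; exact hsk
        · rw [heq] at hsk; linarith
      set u0 : ℝ := τ + (k:ℝ)*ℓ with hu0
      have hτu0 : τ ≤ u0 := by
        rw [hu0]
        have : (0:ℝ) ≤ (k:ℝ)*ℓ := by positivity
        linarith
      have hu0ϑ : u0 ≤ (I:ℝ)*h := le_of_lt (lt_of_lt_of_le hu0s hsϑ)
      have hsu0ℓ : s ≤ u0 + ℓ := by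
        have h1 : s ≤ τ + ((k:ℝ)+1)*ℓ := by
          have := hs.2.trans (min_le_left _ _)
          push_cast at this
          linarith
        rw [hu0]; linarith
      -- previous bound on delayed argument
      have hprev : ∀ u ∈ Icc u0 s, ‖x (u - h)‖ ≤ B k := by
        intro u hu
        apply ih
        refine ⟨by linarith [hu.1], le_min (by linarith [hu.2]) (by linarith [hu.2, hh.le])⟩
      have hMk : 0 ≤ M (B k) := hMnn _ (hBpos k).le
      -- x = y + g on [u0,s]
      have hxg : ∀ u ∈ Icc u0 s, ‖x u‖ ≤ ‖x u - g u (x (u - h))‖ + M (B k) := by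
        intro u hu
        have h1 : ‖g u (x (u - h))‖ ≤ M (B k) :=
          MgB_bound hg (hBpos k).le u ⟨by linarith [hu.1, hτ0], by linarith [hu.2]⟩ _
            (hprev u hu)
        have h2 : ‖x u‖ ≤ ‖x u - g u (x (u - h))‖ + ‖g u (x (u - h))‖ := by
          have := norm_add_le (x u - g u (x (u - h))) (g u (x (u - h)))
          simpa using this
        linarith
      -- sup of ‖y‖ on [u0,s]
      have hycont : ContinuousOn (fun u => ‖x u - g u (x (u - h))‖) (Icc u0 s) :=
        ((hKy.mono (Icc_subset_Icc hτu0 hsϑ)).continuousOn).norm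
      obtain ⟨us, husmem, husmax'⟩ := IsCompact.exists_isMaxOn isCompact_Icc
        ⟨u0, left_mem_Icc.2 hu0s.le⟩ hycont
      have husmax : ∀ u ∈ Icc u0 s, ‖x u - g u (x (u - h))‖ ≤
          ‖x us - g us (x (us - h))‖ := fun u hu => husmax' hu
      set S : ℝ := ‖x us - g us (x (us - h))‖ with hS
      have hSnn : 0 ≤ S := norm_nonneg _
      set L : ℝ := cH * (1 + (S + M (B k)) + B k) + 1 with hL
      have hLnn : 0 ≤ L := by rw [hL]; nlinarith [hBpos k]
      have hadC : ∀ᵐ u ∂(volume : Measure ℝ), u ∈ Ioo u0 s →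
          ∃ l : E n, HasDerivAt (fun r => x r - g r (x (r - h))) l u ∧ ‖l‖ ≤ L := by
        filter_upwards [hae] with u hu huoo
        have humem : u ∈ Icc τ ((I:ℝ)*h) := ⟨by linarith [huoo.1], by linarith [huoo.2]⟩
        obtain ⟨l, hlF, hld⟩ := hu humem
        refine ⟨l, hld, ?_⟩
        have humem' : u ∈ Icc u0 s := ⟨huoo.1.le, huoo.2.le⟩
        have h1 : ‖x u‖ ≤ S + M (B k) := (hxg u humem').trans (by
          have := husmax u humem'
          linarith)
        have h2 : ‖x (u - h)‖ ≤ B k := hprev u humem'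
        have h3 : ‖l‖ ≤ cH * (1 + ‖x u‖ + ‖x (u - h)‖) + 1 := hlF
        rw [hL]
        nlinarith [hcH.le]
      have hKy' : LipschitzOnWith K (fun r => x r - g r (x (r - h))) (Icc u0 s) :=
        hKy.mono (Icc_subset_Icc hτu0 hsϑ)
      have hlipL := lip_of_ae_deriv_bound hu0s.le hLnn hKy' hadC
      -- bound on ‖y u0‖
      have hyu0 : ‖x u0 - g u0 (x (u0 - h))‖ ≤ B k + M (B k) := by
        have h1 : ‖x u0‖ ≤ B k := ih u0 ⟨by linarith, le_min (by rw [hu0]) hu0ϑ⟩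
        have h2 : ‖g u0 (x (u0 - h))‖ ≤ M (B k) :=
          MgB_bound hg (hBpos k).le u0 ⟨by linarith, hu0ϑ⟩ _
            (hprev u0 (left_mem_Icc.2 hu0s.le))
        calc ‖x u0 - g u0 (x (u0 - h))‖ ≤ ‖x u0‖ + ‖g u0 (x (u0 - h))‖ := norm_sub_le _ _
          _ ≤ B k + M (B k) := by linarith
      -- S inequality via the Lipschitz bound
      have hSineq : S ≤ ‖x u0 - g u0 (x (u0 - h))‖ + L * ℓ := by
        have h5 := hlipL u0 (left_mem_Icc.2 hu0s.le) us husmem husmem.1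
        have h6 : L * (us - u0) ≤ L * ℓ :=
          mul_le_mul_of_nonneg_left (by linarith [husmem.2, hsu0ℓ]) hLnn
        have h7 : S - ‖x u0 - g u0 (x (u0 - h))‖ ≤
            ‖(x us - g us (x (us - h))) - (x u0 - g u0 (x (u0 - h)))‖ :=
          norm_sub_norm_le _ _
        linarith
      have hS2 : S ≤ 2*(B k + M (B k) + ℓ*(cH*(1+M (B k)+B k)+1)) := by
        have hint : (0:ℝ) ≤ (1/2 - cH*ℓ) * S := by nlinarith
        rw [hL] at hSineq
        nlinarith [hyu0]
      -- conclude
      have hxs : ‖x s‖ ≤ S + M (B k) := by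
        have := hxg s (right_mem_Icc.2 hu0s.le)
        have := husmax s (right_mem_Icc.2 hu0s.le)
        linarith
      have hBk1 : 2*(B k + M (B k) + ℓ*(cH*(1+M (B k)+B k)+1)) + M (B k) ≤ B (k+1) := by
        rw [hBsucc]; exact le_max_right _ _
      linarith
  -- master gives global bound
  have hglob : ∀ s ∈ Icc (τ - h) ((I:ℝ)*h), ‖x s‖ ≤ αX := by
    intro s hs
    apply master N
    refine ⟨hs.1, le_min ?_ hs.2⟩
    calc s ≤ (I:ℝ)*h := hs.2
      _ ≤ (N:ℝ)*ℓ := hNℓ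
      _ ≤ τ + (N:ℝ)*ℓ := by linarith
  constructor
  · intro t ht
    have hxt : ‖x t‖ ≤ αX := hglob t ⟨by linarith [ht.1], ht.2⟩
    have hxth : ‖x (t - h)‖ ≤ αX := hglob (t - h) ⟨by linarith [ht.1], by linarith [ht.2]⟩
    have hgt : ‖g t (x (t - h))‖ ≤ M αX :=
      MgB_bound hg hαXpos.le t ⟨by linarith [ht.1, hτ0], ht.2⟩ _ hxth
    refine ⟨⟨?_, hxt, ?_⟩, ?_⟩
    · -- IsPLip h (shift x t)
      have h1 : PiecewiseLipOn x (t - h) t :=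
        hxpl.mono' (by linarith [ht.1] : τ - h ≤ t - h) (by linarith : t - h < t)
          (by
            have : τ - h < (I:ℝ)*h := by linarith
            exact ht.2)
      exact h1.shift'
    · -- normInf bound
      haveI : Nonempty (Ico (-h) (0:ℝ)) := ⟨⟨-h, le_refl _, by linarith⟩⟩
      apply ciSup_le
      rintro ⟨ξ, hξ⟩
      show ‖x (t + ξ)‖ ≤ αX
      apply hglob
      constructor
      · have := hξ.1; have := ht.1; linarith
      · have := hξ.2; have := ht.2; linarith
    · -- ‖y t‖ ≤ αXs
      calc ‖x t - g t (x (t - h))‖ ≤ ‖x t‖ + ‖g t (x (t - h))‖ := norm_sub_le _ _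
        _ ≤ αX + M αX := by linarith
        _ = αXs := by rw [hαXs]
  · -- uniform Lipschitz bound for y
    have hlamnn : 0 ≤ lamXs := by rw [hlamXs]; positivity
    have had : ∀ᵐ u ∂(volume : Measure ℝ), u ∈ Ioo τ ((I:ℝ)*h) →
        ∃ l : E n, HasDerivAt (fun r => x r - g r (x (r - h))) l u ∧ ‖l‖ ≤ lamXs := by
      filter_upwards [hae] with u hu huoo
      have humem : u ∈ Icc τ ((I:ℝ)*h) := ⟨huoo.1.le, huoo.2.le⟩
      obtain ⟨l, hlF, hld⟩ := hu humem
      refine ⟨l, hld, ?_⟩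
      have h1 : ‖x u‖ ≤ αX := hglob u ⟨by linarith [humem.1], humem.2⟩
      have h2 : ‖x (u - h)‖ ≤ αX := hglob (u - h) ⟨by linarith [humem.1], by linarith [humem.2]⟩
      have h3 : ‖l‖ ≤ cH * (1 + ‖x u‖ + ‖x (u - h)‖) + 1 := hlF
      rw [hlamXs]
      nlinarith [hcH.le]
    have key := lip_of_ae_deriv_bound hτϑ hlamnn hKy had
    intro t ht t' ht'
    rcases le_total t' t with hc | hc
    · have := key t' ht' t ht hc
      rw [abs_of_nonneg (by linarith)]
      exact this
    · have := key t ht t' ht' hc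
      rw [abs_of_nonpos (by linarith), norm_sub_rev]
      calc ‖(x t' - g t' (x (t' - h))) - (x t - g t (x (t - h)))‖ ≤ lamXs * (t' - t) := this
        _ = lamXs * -(t - t') := by ring
end
end
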